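/- arXiv:2203.15054 — 8 statements merged into one kernel-verified Lean document; each statement's English description precedes it below -/
import Mathlib

section
/- For every positive real number s, the quantity (1 - cos(2s))/s² - sin(2s)/(2s) - 1 is negative. -/
open Real Set

-- sin t - t * cos t > 0 for t ∈ (0, 4]
lemma aux_sin_sub_mul_cos_pos {t : ℝ} (ht : 0 < t) (ht4 : t ≤ 4) :
    0 < Real.sin t - t * Real.cos t := by
  rcases le_or_gt t π with hpi | hpi
  · -- derivative argument on [0, π]
    have key : StrictMonoOn (fun x : ℝ => Real.sin x - x * Real.cos x) (Icc 0 π) := by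
      apply strictMonoOn_of_deriv_pos (convex_Icc 0 π)
      · fun_prop
      · intro x hx
        rw [interior_Icc] at hx
        have hd : HasDerivAt (fun x : ℝ => Real.sin x - x * Real.cos x)
            (Real.cos x - (1 * Real.cos x + x * (-Real.sin x))) x :=
          (Real.hasDerivAt_sin x).sub ((hasDerivAt_id x).mul (Real.hasDerivAt_cos x))
        rw [hd.deriv]
        have h1 : 0 < Real.sin x := Real.sin_pos_of_pos_of_lt_pi hx.1 hx.2
        have : Real.cos x - (1 * Real.cos x + x * (-Real.sin x)) = x * Real.sin x := by ring
        rw [this]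
        exact mul_pos hx.1 h1
    have := key (Set.mem_Icc.2 ⟨le_refl 0, Real.pi_pos.le⟩)
      (Set.mem_Icc.2 ⟨ht.le, hpi⟩) ht
    simpa using this
  · -- π < t ≤ 4 : numeric
    have hcos : Real.cos t = -Real.cos (t - π) := by
      rw [show t - π = -(π - t) by ring, Real.cos_neg, Real.cos_pi_sub, neg_neg]
    have h0 : 0 < t - π := by linarith
    have h1 : t - π ≤ 1 := by
      have := Real.pi_gt_d6; linarith
    have hc1 : Real.cos 1 ≤ Real.cos (t - π) :=
      Real.cos_le_cos_of_nonneg_of_le_pi h0.le (by linarith [Real.pi_gt_d6]) h1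
    have hcb : (0.44 : ℝ) ≤ Real.cos 1 := by
      have := Real.cos_bound (x := 1) (by norm_num)
      have := abs_sub_le_iff.1 this
      norm_num at this ⊢
      linarith [this.2]
    have hsin : -1 ≤ Real.sin t := Real.neg_one_le_sin t
    have hπ : (3.14 : ℝ) ≤ π := by linarith [Real.pi_gt_d6]
    have hmul : (3.14 : ℝ) * 0.44 ≤ t * Real.cos (t - π) := by
      have hcpos : (0 : ℝ) < Real.cos (t - π) := by linarith
      have : (3.14 : ℝ) ≤ t := by linarith
      nlinarith
    rw [hcos]
    nlinarith

-- F'' /2 : G(s) = cos 2s + s sin 2s - 1 < 0 on (0,2]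
lemma aux_G_neg {s : ℝ} (hs : 0 < s) (hs2 : s ≤ 2) :
    Real.cos (2*s) + s * Real.sin (2*s) - 1 < 0 := by
  have key : StrictAntiOn (fun x : ℝ => Real.cos (2*x) + x * Real.sin (2*x) - 1) (Icc 0 2) := by
    apply strictAntiOn_of_deriv_neg (convex_Icc 0 2)
    · fun_prop
    · intro x hx
      rw [interior_Icc] at hx
      have h2x : HasDerivAt (fun x : ℝ => 2 * x) 2 x := by
        simpa using (hasDerivAt_id x).const_mul 2
      have hdc : HasDerivAt (fun x : ℝ => Real.cos (2*x)) (-Real.sin (2*x) * 2) x :=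
        (Real.hasDerivAt_cos (2*x)).comp x h2x
      have hds : HasDerivAt (fun x : ℝ => Real.sin (2*x)) (Real.cos (2*x) * 2) x :=
        (Real.hasDerivAt_sin (2*x)).comp x h2x
      have hd : HasDerivAt (fun x : ℝ => Real.cos (2*x) + x * Real.sin (2*x) - 1)
          (-Real.sin (2*x) * 2 + (1 * Real.sin (2*x) + x * (Real.cos (2*x) * 2)) - 0) x :=
        (hdc.add ((hasDerivAt_id x).mul hds)).sub (hasDerivAt_const x 1)
      rw [hd.deriv]
      have := aux_sin_sub_mul_cos_pos (t := 2*x) (by linarith [hx.1]) (by linarith [hx.2])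
      nlinarith
  have := key (Set.mem_Icc.2 ⟨le_refl 0, by norm_num⟩) (Set.mem_Icc.2 ⟨hs.le, hs2⟩) hs
  simpa using this

-- F' : H(s) = (3/2) sin 2s - s cos 2s - 2 s < 0 on (0,2]
lemma aux_H_neg {s : ℝ} (hs : 0 < s) (hs2 : s ≤ 2) :
    (3/2) * Real.sin (2*s) - s * Real.cos (2*s) - 2*s < 0 := by
  have key : StrictAntiOn (fun x : ℝ => (3/2) * Real.sin (2*x) - x * Real.cos (2*x) - 2*x)
      (Icc 0 2) := by
    apply strictAntiOn_of_deriv_neg (convex_Icc 0 2)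
    · fun_prop
    · intro x hx
      rw [interior_Icc] at hx
      have h2x : HasDerivAt (fun x : ℝ => 2 * x) 2 x := by
        simpa using (hasDerivAt_id x).const_mul 2
      have hdc : HasDerivAt (fun x : ℝ => Real.cos (2*x)) (-Real.sin (2*x) * 2) x :=
        (Real.hasDerivAt_cos (2*x)).comp x h2x
      have hds : HasDerivAt (fun x : ℝ => Real.sin (2*x)) (Real.cos (2*x) * 2) x :=
        (Real.hasDerivAt_sin (2*x)).comp x h2x
      have hd : HasDerivAt (fun x : ℝ => (3/2) * Real.sin (2*x) - x * Real.cos (2*x) - 2*x)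
          ((3/2) * (Real.cos (2*x) * 2) - (1 * Real.cos (2*x) + x * (-Real.sin (2*x) * 2))
            - 2) x := by
        exact ((hds.const_mul (3/2)).sub ((hasDerivAt_id x).mul hdc)).sub
          (by simpa using (hasDerivAt_id x).const_mul 2)
      rw [hd.deriv]
      have := aux_G_neg (s := x) hx.1 hx.2.le
      nlinarith
  have := key (Set.mem_Icc.2 ⟨le_refl 0, by norm_num⟩) (Set.mem_Icc.2 ⟨hs.le, hs2⟩) hs
  simpa using this

-- F(s) = 1 - cos 2s - (s/2) sin 2s - s^2 < 0 on (0,2]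
lemma aux_F_neg {s : ℝ} (hs : 0 < s) (hs2 : s ≤ 2) :
    1 - Real.cos (2*s) - s/2 * Real.sin (2*s) - s^2 < 0 := by
  have key : StrictAntiOn (fun x : ℝ => 1 - Real.cos (2*x) - x/2 * Real.sin (2*x) - x^2)
      (Icc 0 2) := by
    apply strictAntiOn_of_deriv_neg (convex_Icc 0 2)
    · fun_prop
    · intro x hx
      rw [interior_Icc] at hx
      have h2x : HasDerivAt (fun x : ℝ => 2 * x) 2 x := by
        simpa using (hasDerivAt_id x).const_mul 2
      have hdc : HasDerivAt (fun x : ℝ => Real.cos (2*x)) (-Real.sin (2*x) * 2) x :=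
        (Real.hasDerivAt_cos (2*x)).comp x h2x
      have hds : HasDerivAt (fun x : ℝ => Real.sin (2*x)) (Real.cos (2*x) * 2) x :=
        (Real.hasDerivAt_sin (2*x)).comp x h2x
      have hdiv : HasDerivAt (fun x : ℝ => x/2) (1/2 : ℝ) x := by
        simpa using (hasDerivAt_id x).div_const 2
      have hd : HasDerivAt (fun x : ℝ => 1 - Real.cos (2*x) - x/2 * Real.sin (2*x) - x^2)
          (0 - (-Real.sin (2*x) * 2) - (1/2 * Real.sin (2*x) + x/2 * (Real.cos (2*x) * 2))
            - 2 * x^1) x := by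
        exact (((hasDerivAt_const x 1).sub hdc).sub (hdiv.mul hds)).sub (hasDerivAt_pow 2 x)
      rw [hd.deriv]
      have := aux_H_neg (s := x) hx.1 hx.2.le
      nlinarith
  have := key (Set.mem_Icc.2 ⟨le_refl 0, by norm_num⟩) (Set.mem_Icc.2 ⟨hs.le, hs2⟩) hs
  simpa using this

theorem stmt_0 (s : ℝ) (hs : 0 < s) :
    (1 - Real.cos (2 * s)) / s ^ 2 - Real.sin (2 * s) / (2 * s) - 1 < 0 := by
  have hF : 1 - Real.cos (2*s) - s/2 * Real.sin (2*s) - s^2 < 0 := by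
    rcases le_or_gt s 2 with h | h
    · exact aux_F_neg hs h
    · have h1 : Real.cos (2*s) ≥ -1 := Real.neg_one_le_cos (2*s)
      have h2 : Real.sin (2*s) ≥ -1 := Real.neg_one_le_sin (2*s)
      nlinarith
  have heq : (1 - Real.cos (2 * s)) / s ^ 2 - Real.sin (2 * s) / (2 * s) - 1
      = (1 - Real.cos (2*s) - s/2 * Real.sin (2*s) - s^2) / s^2 := by
    field_simp
  rw [heq]
  exact div_neg_of_neg_of_pos hF (by positivity)
end

section
/- For every positive real number s, the quantity (cos(2s) - 1)/s² + sin(2s)/(2s) + 1 is positive. -/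
open Real

/-- If `f 0 = 0` and `f` has nonnegative derivative `f'` on `[0, ∞)`,
then `f` is nonnegative on `[0, ∞)`. -/
lemma aux_nonneg_of_deriv {f f' : ℝ → ℝ} (hf : ∀ x, HasDerivAt f (f' x) x)
    (hf' : ∀ x, 0 ≤ x → 0 ≤ f' x) (h0 : f 0 = 0) {x : ℝ} (hx : 0 ≤ x) : 0 ≤ f x := by
  have hm : MonotoneOn f (Set.Ici (0 : ℝ)) := by
    apply monotoneOn_of_hasDerivWithinAt_nonneg (convex_Ici 0)
      (fun y _ => (hf y).continuousAt.continuousWithinAt)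
      (fun y _ => (hf y).hasDerivWithinAt)
    intro y hy
    rw [interior_Ici] at hy
    exact hf' y (le_of_lt hy)
  have := hm Set.self_mem_Ici hx hx
  rw [h0] at this
  exact this

lemma aux_sin_lb1 {x : ℝ} (hx : 0 ≤ x) : x - x ^ 3 / 6 ≤ Real.sin x := by
  have h := aux_nonneg_of_deriv (f := fun t => Real.sin t - (t - t ^ 3 / 6))
    (f' := fun t => Real.cos t - (1 - t ^ 2 / 2)) (fun t => by
      have := (Real.hasDerivAt_sin t).sub ((hasDerivAt_id t).sub
        ((hasDerivAt_pow 3 t).div_const 6))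
      refine this.congr_deriv ?_; simp; ring)
    (fun t _ => by nlinarith [Real.one_sub_sq_div_two_le_cos (x := t)])
    (by norm_num) hx
  linarith

lemma aux_cos_ub1 {x : ℝ} (hx : 0 ≤ x) : Real.cos x ≤ 1 - x ^ 2 / 2 + x ^ 4 / 24 := by
  have h := aux_nonneg_of_deriv
    (f := fun t => (1 - t ^ 2 / 2 + t ^ 4 / 24) - Real.cos t)
    (f' := fun t => Real.sin t - (t - t ^ 3 / 6)) (fun t => by
      have := (((hasDerivAt_const t (1:ℝ)).sub ((hasDerivAt_pow 2 t).div_const 2)).add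
        ((hasDerivAt_pow 4 t).div_const 24)).sub (Real.hasDerivAt_cos t)
      refine this.congr_deriv ?_; simp; ring)
    (fun t ht => by have := aux_sin_lb1 ht; linarith)
    (by norm_num) hx
  linarith

lemma aux_sin_ub1 {x : ℝ} (hx : 0 ≤ x) :
    Real.sin x ≤ x - x ^ 3 / 6 + x ^ 5 / 120 := by
  have h := aux_nonneg_of_deriv
    (f := fun t => (t - t ^ 3 / 6 + t ^ 5 / 120) - Real.sin t)
    (f' := fun t => (1 - t ^ 2 / 2 + t ^ 4 / 24) - Real.cos t) (fun t => by
      have := (((hasDerivAt_id t).sub ((hasDerivAt_pow 3 t).div_const 6)).add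
        ((hasDerivAt_pow 5 t).div_const 120)).sub (Real.hasDerivAt_sin t)
      refine this.congr_deriv ?_; simp; ring)
    (fun t ht => by have := aux_cos_ub1 ht; linarith)
    (by norm_num) hx
  linarith

lemma aux_cos_lb1 {x : ℝ} (hx : 0 ≤ x) :
    1 - x ^ 2 / 2 + x ^ 4 / 24 - x ^ 6 / 720 ≤ Real.cos x := by
  have h := aux_nonneg_of_deriv
    (f := fun t => Real.cos t - (1 - t ^ 2 / 2 + t ^ 4 / 24 - t ^ 6 / 720))
    (f' := fun t => (t - t ^ 3 / 6 + t ^ 5 / 120) - Real.sin t) (fun t => by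
      have := (Real.hasDerivAt_cos t).sub ((((hasDerivAt_const t (1:ℝ)).sub
        ((hasDerivAt_pow 2 t).div_const 2)).add
        ((hasDerivAt_pow 4 t).div_const 24)).sub ((hasDerivAt_pow 6 t).div_const 720))
      refine this.congr_deriv ?_; simp; ring)
    (fun t ht => by have := aux_sin_ub1 ht; linarith)
    (by norm_num) hx
  linarith

lemma aux_sin_lb2 {x : ℝ} (hx : 0 ≤ x) :
    x - x ^ 3 / 6 + x ^ 5 / 120 - x ^ 7 / 5040 ≤ Real.sin x := by
  have h := aux_nonneg_of_deriv
    (f := fun t => Real.sin t - (t - t ^ 3 / 6 + t ^ 5 / 120 - t ^ 7 / 5040))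
    (f' := fun t => Real.cos t - (1 - t ^ 2 / 2 + t ^ 4 / 24 - t ^ 6 / 720)) (fun t => by
      have := (Real.hasDerivAt_sin t).sub ((((hasDerivAt_id t).sub
        ((hasDerivAt_pow 3 t).div_const 6)).add
        ((hasDerivAt_pow 5 t).div_const 120)).sub ((hasDerivAt_pow 7 t).div_const 5040))
      refine this.congr_deriv ?_; simp; ring)
    (fun t ht => by have := aux_cos_lb1 ht; linarith)
    (by norm_num) hx
  linarith

theorem stmt_1 (s : ℝ) (hs : 0 < s) :
    0 < (Real.cos (2 * s) - 1) / s ^ 2 + Real.sin (2 * s) / (2 * s) + 1 := by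
  have hs2 : (0:ℝ) < s ^ 2 := by positivity
  have key : 0 < Real.cos (2 * s) - 1 + s * Real.sin (2 * s) / 2 + s ^ 2 := by
    rcases le_or_gt s 1.8 with h | h
    · have h1 := aux_sin_lb2 (x := 2 * s) (by linarith)
      have h2 := aux_cos_lb1 (x := 2 * s) (by linarith)
      have hmul : 0 ≤ s * (Real.sin (2 * s) - (2 * s - (2 * s) ^ 3 / 6 + (2 * s) ^ 5 / 120 - (2 * s) ^ 7 / 5040)) :=
        mul_nonneg hs.le (by linarith)
      have hss : s ^ 2 ≤ 3.24 := by nlinarith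
      have h8 : s ^ 8 ≤ 3.24 * s ^ 6 := by
        calc s ^ 8 = s ^ 6 * s ^ 2 := by ring
        _ ≤ s ^ 6 * 3.24 := by nlinarith [pow_pos hs 6]
        _ = 3.24 * s ^ 6 := by ring
      nlinarith [pow_pos hs 6]
    · have h1 := Real.neg_one_le_sin (2 * s)
      have h2 := Real.neg_one_le_cos (2 * s)
      nlinarith
  have heq : (Real.cos (2 * s) - 1) / s ^ 2 + Real.sin (2 * s) / (2 * s) + 1
      = (Real.cos (2 * s) - 1 + s * Real.sin (2 * s) / 2 + s ^ 2) / s ^ 2 := by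
    field_simp
  rw [heq]
  positivity
end

section
/- If n is an integer with n ≥ 6, then the function s ↦ (1 - cos(2s))/sⁿ - sin(2s)/(2s^(n-1)) - 1/s^(n-2) is strictly increasing on the open interval (0, ∞). -/
open Real

private lemma step (F F' : ℝ → ℝ) (hF : ∀ x, HasDerivAt F (F' x) x) (h0 : F 0 = 0)
    (hd : ∀ x, 0 ≤ x → 0 ≤ F' x) : ∀ x, 0 ≤ x → 0 ≤ F x := by
  intro x hx
  have mono : MonotoneOn F (Set.Ici 0) := by
    apply monotoneOn_of_deriv_nonneg (convex_Ici 0)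
    · exact fun y _ => (hF y).differentiableAt.continuousAt.continuousWithinAt
    · exact fun y _ => (hF y).differentiableAt.differentiableWithinAt
    · intro y hy
      rw [(hF y).deriv]
      exact hd y (le_of_lt (by simpa using hy))
  calc (0:ℝ) = F 0 := h0.symm
    _ ≤ F x := mono (Set.mem_Ici.mpr (le_refl 0)) (Set.mem_Ici.mpr hx) hx

private lemma cos_ge_2 : ∀ x : ℝ, 0 ≤ x → 1 - x^2/2 ≤ Real.cos x := by
  have h := step (fun y => Real.cos y - (1 - y^2/2)) (fun y => -Real.sin y + y)
    (fun y => by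
      have h2 : HasDerivAt (fun y : ℝ => 1 - y^2/2) (-((2:ℕ)*y^(2-1)/2)) y :=
        ((hasDerivAt_pow 2 y).div_const 2).const_sub 1
      refine ((Real.hasDerivAt_cos y).sub h2).congr_deriv ?_
      push_cast; ring)
    (by norm_num)
    (fun y hy => by have := Real.sin_le hy; linarith)
  intro x hx; have := h x hx; linarith

private lemma sin_ge_3 : ∀ x : ℝ, 0 ≤ x → x - x^3/6 ≤ Real.sin x := by
  have h := step (fun y => Real.sin y - (y - y^3/6)) (fun y => Real.cos y - (1 - y^2/2))
    (fun y => by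
      have h2 : HasDerivAt (fun y : ℝ => y - y^3/6) (1 - (3:ℕ)*y^(3-1)/6) y :=
        (hasDerivAt_id' y ).sub ((hasDerivAt_pow 3 y).div_const 6)
      refine ((Real.hasDerivAt_sin y).sub h2).congr_deriv ?_
      push_cast; ring)
    (by norm_num)
    (fun y hy => by have := cos_ge_2 y hy; linarith)
  intro x hx; have := h x hx; linarith

private lemma cos_le_4 : ∀ x : ℝ, 0 ≤ x → Real.cos x ≤ 1 - x^2/2 + x^4/24 := by
  have h := step (fun y => 1 - y^2/2 + y^4/24 - Real.cos y)
      (fun y => Real.sin y - (y - y^3/6))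
    (fun y => by
      have h2 : HasDerivAt (fun y : ℝ => 1 - y^2/2 + y^4/24)
          (-((2:ℕ)*y^(2-1)/2) + (4:ℕ)*y^(4-1)/24) y :=
        (((hasDerivAt_pow 2 y).div_const 2).const_sub 1).add ((hasDerivAt_pow 4 y).div_const 24)
      refine (h2.sub (Real.hasDerivAt_cos y)).congr_deriv ?_
      push_cast; ring)
    (by norm_num)
    (fun y hy => by have := sin_ge_3 y hy; linarith)
  intro x hx; have := h x hx; linarith

private lemma sin_le_5 : ∀ x : ℝ, 0 ≤ x → Real.sin x ≤ x - x^3/6 + x^5/120 := by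
  have h := step (fun y => y - y^3/6 + y^5/120 - Real.sin y)
      (fun y => 1 - y^2/2 + y^4/24 - Real.cos y)
    (fun y => by
      have h2 : HasDerivAt (fun y : ℝ => y - y^3/6 + y^5/120)
          (1 - (3:ℕ)*y^(3-1)/6 + (5:ℕ)*y^(5-1)/120) y :=
        ((hasDerivAt_id' y).sub ((hasDerivAt_pow 3 y).div_const 6)).add
          ((hasDerivAt_pow 5 y).div_const 120)
      refine (h2.sub (Real.hasDerivAt_sin y)).congr_deriv ?_
      push_cast; ring)
    (by norm_num)
    (fun y hy => by have := cos_le_4 y hy; linarith)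
  intro x hx; have := h x hx; linarith

private lemma cos_ge_6 : ∀ x : ℝ, 0 ≤ x → 1 - x^2/2 + x^4/24 - x^6/720 ≤ Real.cos x := by
  have h := step (fun y => Real.cos y - (1 - y^2/2 + y^4/24 - y^6/720))
      (fun y => y - y^3/6 + y^5/120 - Real.sin y)
    (fun y => by
      have h2 : HasDerivAt (fun y : ℝ => 1 - y^2/2 + y^4/24 - y^6/720)
          (-((2:ℕ)*y^(2-1)/2) + (4:ℕ)*y^(4-1)/24 - (6:ℕ)*y^(6-1)/720) y :=
        ((((hasDerivAt_pow 2 y).div_const 2).const_sub 1).add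
          ((hasDerivAt_pow 4 y).div_const 24)).sub ((hasDerivAt_pow 6 y).div_const 720)
      refine ((Real.hasDerivAt_cos y).sub h2).congr_deriv ?_
      push_cast; ring)
    (by norm_num)
    (fun y hy => by have := sin_le_5 y hy; linarith)
  intro x hx; have := h x hx; linarith

private lemma sin_ge_7 : ∀ x : ℝ, 0 ≤ x → x - x^3/6 + x^5/120 - x^7/5040 ≤ Real.sin x := by
  have h := step (fun y => Real.sin y - (y - y^3/6 + y^5/120 - y^7/5040))
      (fun y => Real.cos y - (1 - y^2/2 + y^4/24 - y^6/720))
    (fun y => by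
      have h2 : HasDerivAt (fun y : ℝ => y - y^3/6 + y^5/120 - y^7/5040)
          (1 - (3:ℕ)*y^(3-1)/6 + (5:ℕ)*y^(5-1)/120 - (7:ℕ)*y^(7-1)/5040) y :=
        (((hasDerivAt_id' y).sub ((hasDerivAt_pow 3 y).div_const 6)).add
          ((hasDerivAt_pow 5 y).div_const 120)).sub ((hasDerivAt_pow 7 y).div_const 5040)
      refine ((Real.hasDerivAt_sin y).sub h2).congr_deriv ?_
      push_cast; ring)
    (by norm_num)
    (fun y hy => by have := cos_ge_6 y hy; linarith)
  intro x hx; have := h x hx; linarith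

private lemma cos_le_8 : ∀ x : ℝ, 0 ≤ x →
    Real.cos x ≤ 1 - x^2/2 + x^4/24 - x^6/720 + x^8/40320 := by
  have h := step (fun y => 1 - y^2/2 + y^4/24 - y^6/720 + y^8/40320 - Real.cos y)
      (fun y => Real.sin y - (y - y^3/6 + y^5/120 - y^7/5040))
    (fun y => by
      have h2 : HasDerivAt (fun y : ℝ => 1 - y^2/2 + y^4/24 - y^6/720 + y^8/40320)
          (-((2:ℕ)*y^(2-1)/2) + (4:ℕ)*y^(4-1)/24 - (6:ℕ)*y^(6-1)/720 + (8:ℕ)*y^(8-1)/40320) y :=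
        (((((hasDerivAt_pow 2 y).div_const 2).const_sub 1).add
          ((hasDerivAt_pow 4 y).div_const 24)).sub ((hasDerivAt_pow 6 y).div_const 720)).add
          ((hasDerivAt_pow 8 y).div_const 40320)
      refine (h2.sub (Real.hasDerivAt_cos y)).congr_deriv ?_
      push_cast; ring)
    (by norm_num)
    (fun y hy => by have := sin_ge_7 y hy; linarith)
  intro x hx; have := h x hx; linarith

private lemma sin_le_9 : ∀ x : ℝ, 0 ≤ x →
    Real.sin x ≤ x - x^3/6 + x^5/120 - x^7/5040 + x^9/362880 := by
  have h := step (fun y => y - y^3/6 + y^5/120 - y^7/5040 + y^9/362880 - Real.sin y)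
      (fun y => 1 - y^2/2 + y^4/24 - y^6/720 + y^8/40320 - Real.cos y)
    (fun y => by
      have h2 : HasDerivAt (fun y : ℝ => y - y^3/6 + y^5/120 - y^7/5040 + y^9/362880)
          (1 - (3:ℕ)*y^(3-1)/6 + (5:ℕ)*y^(5-1)/120 - (7:ℕ)*y^(7-1)/5040 + (9:ℕ)*y^(9-1)/362880) y :=
        ((((hasDerivAt_id' y).sub ((hasDerivAt_pow 3 y).div_const 6)).add
          ((hasDerivAt_pow 5 y).div_const 120)).sub ((hasDerivAt_pow 7 y).div_const 5040)).add
          ((hasDerivAt_pow 9 y).div_const 362880)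
      refine (h2.sub (Real.hasDerivAt_sin y)).congr_deriv ?_
      push_cast; ring)
    (by norm_num)
    (fun y hy => by have := cos_le_8 y hy; linarith)
  intro x hx; have := h x hx; linarith

private lemma cos_ge_10 : ∀ x : ℝ, 0 ≤ x →
    1 - x^2/2 + x^4/24 - x^6/720 + x^8/40320 - x^10/3628800 ≤ Real.cos x := by
  have h := step
      (fun y => Real.cos y - (1 - y^2/2 + y^4/24 - y^6/720 + y^8/40320 - y^10/3628800))
      (fun y => y - y^3/6 + y^5/120 - y^7/5040 + y^9/362880 - Real.sin y)
    (fun y => by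
      have h2 : HasDerivAt
          (fun y : ℝ => 1 - y^2/2 + y^4/24 - y^6/720 + y^8/40320 - y^10/3628800)
          (-((2:ℕ)*y^(2-1)/2) + (4:ℕ)*y^(4-1)/24 - (6:ℕ)*y^(6-1)/720 + (8:ℕ)*y^(8-1)/40320
            - (10:ℕ)*y^(10-1)/3628800) y :=
        ((((((hasDerivAt_pow 2 y).div_const 2).const_sub 1).add
          ((hasDerivAt_pow 4 y).div_const 24)).sub ((hasDerivAt_pow 6 y).div_const 720)).add
          ((hasDerivAt_pow 8 y).div_const 40320)).sub ((hasDerivAt_pow 10 y).div_const 3628800)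
      refine ((Real.hasDerivAt_cos y).sub h2).congr_deriv ?_
      push_cast; ring)
    (by norm_num)
    (fun y hy => by have := sin_le_9 y hy; linarith)
  intro x hx; have := h x hx; linarith

private lemma sin_ge_11 : ∀ x : ℝ, 0 ≤ x →
    x - x^3/6 + x^5/120 - x^7/5040 + x^9/362880 - x^11/39916800 ≤ Real.sin x := by
  have h := step
      (fun y => Real.sin y - (y - y^3/6 + y^5/120 - y^7/5040 + y^9/362880 - y^11/39916800))
      (fun y => Real.cos y - (1 - y^2/2 + y^4/24 - y^6/720 + y^8/40320 - y^10/3628800))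
    (fun y => by
      have h2 : HasDerivAt
          (fun y : ℝ => y - y^3/6 + y^5/120 - y^7/5040 + y^9/362880 - y^11/39916800)
          (1 - (3:ℕ)*y^(3-1)/6 + (5:ℕ)*y^(5-1)/120 - (7:ℕ)*y^(7-1)/5040 + (9:ℕ)*y^(9-1)/362880
            - (11:ℕ)*y^(11-1)/39916800) y :=
        (((((hasDerivAt_id' y).sub ((hasDerivAt_pow 3 y).div_const 6)).add
          ((hasDerivAt_pow 5 y).div_const 120)).sub ((hasDerivAt_pow 7 y).div_const 5040)).add
          ((hasDerivAt_pow 9 y).div_const 362880)).sub ((hasDerivAt_pow 11 y).div_const 39916800)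
      refine ((Real.hasDerivAt_sin y).sub h2).congr_deriv ?_
      push_cast; ring)
    (by norm_num)
    (fun y hy => by have := cos_ge_10 y hy; linarith)
  intro x hx; have := h x hx; linarith
private lemma Hpos : ∀ t : ℝ, 0 < t →
    0 < 4*t^2 + 9*t*Real.sin t + (24 - t^2)*Real.cos t - 24 := by
  intro t ht
  rcases le_or_gt (t^2) 24 with h24 | h24
  · have hs := sin_ge_11 t ht.le
    have hc := cos_ge_10 t ht.le
    have h9 : (0:ℝ) ≤ 9*t := by positivity
    have hint1 := mul_le_mul_of_nonneg_left hs h9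
    have hint2 := mul_le_mul_of_nonneg_left hc (by linarith : (0:ℝ) ≤ 24 - t^2)
    have q : 0 < 1/5040 - t^2/151200 + t^4/19958400 := by
      nlinarith [pow_pos ht 4]
    have key : 0 < 4*t^2
        + 9*t*(t - t^3/6 + t^5/120 - t^7/5040 + t^9/362880 - t^11/39916800)
        + (24 - t^2)*(1 - t^2/2 + t^4/24 - t^6/720 + t^8/40320 - t^10/3628800) - 24 := by
      have h8 : (0:ℝ) < t^8 := by positivity
      have := mul_pos h8 q
      nlinarith [this]
    nlinarith [hint1, hint2, key]
  · have hs := Real.neg_one_le_sin t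
    have hc := Real.cos_le_one t
    have h9 : (0:ℝ) ≤ 9*t := by positivity
    have hint1 := mul_le_mul_of_nonneg_left hs h9
    have hint2 := mul_le_mul_of_nonpos_left hc (by linarith : 24 - t^2 ≤ 0)
    nlinarith [hint1, hint2]

private lemma Apos : ∀ t : ℝ, 0 ≤ t →
    0 ≤ t^2 + t*Real.sin t + 4*Real.cos t - 4 := by
  intro t ht
  rcases le_or_gt (t^2) 14 with h14 | h14
  · have hs := sin_ge_7 t ht
    have hc := cos_ge_6 t ht
    have hint1 := mul_le_mul_of_nonneg_left hs ht
    have hint2 := mul_le_mul_of_nonneg_left hc (by norm_num : (0:ℝ) ≤ 4)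
    have key : 0 ≤ t^2 + t*(t - t^3/6 + t^5/120 - t^7/5040)
        + 4*(1 - t^2/2 + t^4/24 - t^6/720) - 4 := by
      have h6 : (0:ℝ) ≤ t^6 := by positivity
      nlinarith [mul_nonneg h6 (by linarith : (0:ℝ) ≤ 14 - t^2)]
    nlinarith [hint1, hint2, key]
  · have hs := Real.neg_one_le_sin t
    have hc := Real.neg_one_le_cos t
    have hint1 := mul_le_mul_of_nonneg_left hs ht
    nlinarith [hint1, hc, sq_nonneg (t-5)]
theorem stmt_2 (n : ℕ) (hn : 6 ≤ n) :
    StrictMonoOn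
      (fun s : ℝ =>
        (1 - Real.cos (2 * s)) / s ^ n - Real.sin (2 * s) / (2 * s ^ (n - 1)) -
          1 / s ^ (n - 2))
      (Set.Ioi 0) := by
  obtain ⟨m, rfl⟩ : ∃ m, n = m + 6 := ⟨n - 6, by omega⟩
  simp only [show m + 6 - 1 = m + 5 from rfl, show m + 6 - 2 = m + 4 from rfl]
  have hder : ∀ s ∈ Set.Ioi (0:ℝ),
      HasDerivAt (fun s : ℝ =>
        (1 - Real.cos (2 * s)) / s ^ (m+6) - Real.sin (2 * s) / (2 * s ^ (m+5)) -
          1 / s ^ (m+4))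
      ((((m:ℝ)+9)/2 * s * Real.sin (2*s) - ((m:ℝ)+6)*(1-Real.cos (2*s))
        + s^2*(((m:ℝ)+4) - Real.cos (2*s))) / s^(m+7)) s := by
    intro s hs
    have hsp : (0:ℝ) < s := hs
    have hs0 : (s:ℝ) ≠ 0 := ne_of_gt hsp
    have hd2 : HasDerivAt (fun y : ℝ => 2*y) 2 s := by
      simpa using (hasDerivAt_id' s).const_mul 2
    have t1 := (hd2.cos.const_sub 1).div (hasDerivAt_pow (m+6) s) (pow_ne_zero _ hs0)
    have t2 := hd2.sin.div ((hasDerivAt_pow (m+5) s).const_mul 2)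
      (mul_ne_zero two_ne_zero (pow_ne_zero _ hs0))
    have t3 := (hasDerivAt_const s (1:ℝ)).div (hasDerivAt_pow (m+4) s) (pow_ne_zero _ hs0)
    refine ((t1.sub t2).sub t3).congr_deriv ?_
    rw [show m + 6 - 1 = m + 5 from rfl, show m + 5 - 1 = m + 4 from rfl,
      show m + 4 - 1 = m + 3 from rfl]
    have hpow : (s:ℝ)^(m+7) ≠ 0 := pow_ne_zero _ hs0
    field_simp
    push_cast
    ring
  apply strictMonoOn_of_deriv_pos (convex_Ioi 0)
  · intro s hs
    exact (hder s hs).differentiableAt.continuousAt.continuousWithinAt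
  · intro s hs
    rw [interior_Ioi] at hs
    rw [(hder s hs).deriv]
    have hsp : (0:ℝ) < s := hs
    apply div_pos _ (pow_pos hsp _)
    have hA := Apos (2*s) (by linarith)
    have hH := Hpos (2*s) (by linarith)
    have hm : (0:ℝ) ≤ (m:ℝ) := Nat.cast_nonneg m
    nlinarith [mul_nonneg hm hA, hH]
end

section
/- The function s ↦ (1 - cos(2s))/s⁵ - sin(2s)/(2s⁴) - 1/s³ is strictly increasing on the open interval (4, ∞). -/
theorem stmt_3 :
    StrictMonoOn
      (fun s : ℝ =>
        (1 - Real.cos (2 * s)) / s ^ 5 - Real.sin (2 * s) / (2 * s ^ 4) - 1 / s ^ 3)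
      (Set.Ioi 4) := by
  have key : ∀ x : ℝ, x ∈ Set.Ioi (4:ℝ) →
      HasDerivAt (fun s : ℝ =>
        (1 - Real.cos (2 * s)) / s ^ 5 - Real.sin (2 * s) / (2 * s ^ 4) - 1 / s ^ 3)
        ((x ^ 2 * (3 - Real.cos (2*x)) + 4 * x * Real.sin (2*x) + 5 * Real.cos (2*x) - 5)
          / x ^ 6) x := by
    intro x hx
    have hx0 : (0:ℝ) < x := lt_trans (by norm_num) hx
    have hx0' : x ≠ 0 := ne_of_gt hx0
    have h2x : HasDerivAt (fun s : ℝ => 2 * s) 2 x := by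
      simpa using (hasDerivAt_id x).const_mul 2
    have hcos : HasDerivAt (fun s : ℝ => Real.cos (2*s)) (-Real.sin (2*x) * 2) x :=
      (Real.hasDerivAt_cos (2*x)).comp x h2x
    have hsin : HasDerivAt (fun s : ℝ => Real.sin (2*s)) (Real.cos (2*x) * 2) x :=
      (Real.hasDerivAt_sin (2*x)).comp x h2x
    have hnum1 : HasDerivAt (fun s : ℝ => 1 - Real.cos (2*s)) (0 - -Real.sin (2*x) * 2) x :=
      (hasDerivAt_const x (1:ℝ)).sub hcos
    have hp5 : HasDerivAt (fun s : ℝ => s ^ 5) (5 * x ^ 4) x := by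
      simpa using hasDerivAt_pow 5 x
    have hp4 : HasDerivAt (fun s : ℝ => 2 * s ^ 4) (2 * (4 * x ^ 3)) x := by
      simpa using (hasDerivAt_pow 4 x).const_mul 2
    have hp3 : HasDerivAt (fun s : ℝ => s ^ 3) (3 * x ^ 2) x := by
      simpa using hasDerivAt_pow 3 x
    have h1 : HasDerivAt (fun s : ℝ => (1 - Real.cos (2*s)) / s ^ 5)
        (((0 - -Real.sin (2*x) * 2) * x ^ 5 - (1 - Real.cos (2*x)) * (5 * x ^ 4)) / (x ^ 5) ^ 2) x :=
      hnum1.div hp5 (pow_ne_zero 5 hx0')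
    have h2 : HasDerivAt (fun s : ℝ => Real.sin (2*s) / (2 * s ^ 4))
        ((Real.cos (2*x) * 2 * (2 * x ^ 4) - Real.sin (2*x) * (2 * (4 * x ^ 3))) / (2 * x ^ 4) ^ 2) x :=
      hsin.div hp4 (by positivity)
    have h3 : HasDerivAt (fun s : ℝ => 1 / s ^ 3)
        ((0 * x ^ 3 - 1 * (3 * x ^ 2)) / (x ^ 3) ^ 2) x :=
      (hasDerivAt_const x (1:ℝ)).div hp3 (pow_ne_zero 3 hx0')
    have := (h1.sub h2).sub h3
    convert this using 1
    · rfl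
    · rfl
    · rfl
    field_simp
    ring
  apply strictMonoOn_of_hasDerivWithinAt_pos (convex_Ioi 4)
  · apply ContinuousOn.sub
    apply ContinuousOn.sub
    · exact ContinuousOn.div (by fun_prop)
        (by fun_prop) (fun x hx => by
          have : (0:ℝ) < x := lt_trans (by norm_num) hx
          positivity)
    · exact ContinuousOn.div (by fun_prop)
        (by fun_prop) (fun x hx => by
          have : (0:ℝ) < x := lt_trans (by norm_num) hx
          positivity)
    · exact ContinuousOn.div (by fun_prop)
        (by fun_prop) (fun x hx => by
          have : (0:ℝ) < x := lt_trans (by norm_num) hx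
          positivity)
  · intro x hx
    rw [interior_Ioi] at hx
    exact ((key x hx).hasDerivWithinAt)
  · intro x hx
    rw [interior_Ioi] at hx
    have hx0 : (0:ℝ) < x := lt_trans (by norm_num) hx
    have h4 : (4:ℝ) < x := hx
    have hc1 := Real.neg_one_le_cos (2*x)
    have hc2 := Real.cos_le_one (2*x)
    have hs1 := Real.neg_one_le_sin (2*x)
    have hs2 := Real.sin_le_one (2*x)
    apply div_pos _ (by positivity)
    nlinarith [sq_nonneg x, sq_nonneg (x-4)]
end

section
/- The integral from 0 to 2π of (2 sin⁵(s)/s⁵ - cos(s) sin⁴(s)/s⁴ - sin³(s)/s³) ds is negative. -/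
open Real MeasureTheory

noncomputable def fI : ℝ → ℝ := fun s =>
  2 * Real.sin s ^ 5 / s ^ 5 - Real.cos s * Real.sin s ^ 4 / s ^ 4 - Real.sin s ^ 3 / s ^ 3

noncomputable def qq : ℝ → ℝ := fun s =>
  s ^ 2 + s * Real.sin s * Real.cos s - 2 * Real.sin s ^ 2

lemma key1 {x : ℝ} (h0 : 0 ≤ x) (h1 : x ≤ π) : x * Real.cos x ≤ Real.sin x := by
  have mono : MonotoneOn (fun y : ℝ => Real.sin y - y * Real.cos y) (Set.Icc 0 π) := by
    apply monotoneOn_of_deriv_nonneg (convex_Icc 0 π)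
    · exact (Real.continuous_sin.sub (continuous_id.mul Real.continuous_cos)).continuousOn
    · exact (Real.differentiable_sin.sub
        (differentiable_id.mul Real.differentiable_cos)).differentiableOn
    · intro y hy
      rw [interior_Icc] at hy
      have hd : HasDerivAt (fun y : ℝ => Real.sin y - y * Real.cos y)
          (Real.cos y - (1 * Real.cos y + y * -Real.sin y)) y :=
        (Real.hasDerivAt_sin y).sub ((hasDerivAt_id y).mul (Real.hasDerivAt_cos y))
      rw [hd.deriv]
      have hsy : 0 ≤ Real.sin y := Real.sin_nonneg_of_nonneg_of_le_pi hy.1.le hy.2.le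
      nlinarith [mul_nonneg hy.1.le hsy]
  have h := mono (Set.mem_Icc.mpr ⟨le_refl 0, Real.pi_pos.le⟩) (Set.mem_Icc.mpr ⟨h0, h1⟩) h0
  simp at h
  linarith

lemma key2 {t : ℝ} (h0 : 0 ≤ t) (h1 : t ≤ 2 * π) : 3 * Real.sin t - t * Real.cos t - 2 * t ≤ 0 := by
  have mono : MonotoneOn (fun y : ℝ => 2 * y + y * Real.cos y - 3 * Real.sin y)
      (Set.Icc 0 (2 * π)) := by
    apply monotoneOn_of_deriv_nonneg (convex_Icc 0 (2 * π))
    · exact (((continuous_const.mul continuous_id).add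
        (continuous_id.mul Real.continuous_cos)).sub
        (continuous_const.mul Real.continuous_sin)).continuousOn
    · exact (((differentiable_id.const_mul 2).add
        (differentiable_id.mul Real.differentiable_cos)).sub
        (Real.differentiable_sin.const_mul 3)).differentiableOn
    · intro y hy
      rw [interior_Icc] at hy
      have hd : HasDerivAt (fun y : ℝ => 2 * y + y * Real.cos y - 3 * Real.sin y)
          ((2 * 1 + (1 * Real.cos y + y * -Real.sin y)) - 3 * Real.cos y) y :=
        (((hasDerivAt_id y).const_mul 2).add
          ((hasDerivAt_id y).mul (Real.hasDerivAt_cos y))).sub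
          ((Real.hasDerivAt_sin y).const_mul 3)
      rw [hd.deriv]
      have hy2a : 0 ≤ y / 2 := by linarith [hy.1]
      have hy2b : y / 2 ≤ π := by linarith [hy.2]
      have hk := key1 hy2a hy2b
      have hs : 0 ≤ Real.sin (y / 2) := Real.sin_nonneg_of_nonneg_of_le_pi hy2a hy2b
      have hcos : Real.cos y = 2 * Real.cos (y / 2) ^ 2 - 1 := by
        have := Real.cos_two_mul (y / 2)
        rw [show 2 * (y / 2) = y by ring] at this
        exact this
      have hsin : Real.sin y = 2 * Real.sin (y / 2) * Real.cos (y / 2) := by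
        have := Real.sin_two_mul (y / 2)
        rw [show 2 * (y / 2) = y by ring] at this
        exact this
      have hpy := Real.sin_sq_add_cos_sq (y / 2)
      nlinarith [mul_nonneg hs (sub_nonneg.mpr hk)]
  have h := mono (Set.mem_Icc.mpr ⟨le_refl 0, by positivity⟩) (Set.mem_Icc.mpr ⟨h0, h1⟩) h0
  simp at h
  linarith

lemma key3 : MonotoneOn qq (Set.Icc 0 π) := by
  apply monotoneOn_of_deriv_nonneg (convex_Icc 0 π)
  · exact (((continuous_pow 2).add
      ((continuous_id.mul Real.continuous_sin).mul Real.continuous_cos)).sub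
      (continuous_const.mul (Real.continuous_sin.pow 2))).continuousOn
  · exact (((differentiable_pow 2).add
      ((differentiable_id.mul Real.differentiable_sin).mul Real.differentiable_cos)).sub
      ((Real.differentiable_sin.pow 2).const_mul 2)).differentiableOn
  · intro y hy
    rw [interior_Icc] at hy
    have h1 : HasDerivAt (fun y : ℝ => y ^ 2) (2 * y) y := by
      simpa using hasDerivAt_pow 2 y
    have h2 : HasDerivAt (fun y : ℝ => y * Real.sin y * Real.cos y)
        ((1 * Real.sin y + y * Real.cos y) * Real.cos y + y * Real.sin y * -Real.sin y) y :=
      ((hasDerivAt_id y).mul (Real.hasDerivAt_sin y)).mul (Real.hasDerivAt_cos y)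
    have h3 : HasDerivAt (fun y : ℝ => 2 * Real.sin y ^ 2)
        (2 * ((2 : ℕ) * Real.sin y ^ 1 * Real.cos y)) y :=
      ((Real.hasDerivAt_sin y).pow 2).const_mul 2
    have hd : HasDerivAt qq ((2 * y + ((1 * Real.sin y + y * Real.cos y) * Real.cos y
        + y * Real.sin y * -Real.sin y)) - 2 * ((2 : ℕ) * Real.sin y ^ 1 * Real.cos y)) y :=
      (h1.add h2).sub h3
    rw [hd.deriv]
    have hk := key2 (t := 2 * y) (by linarith [hy.1]) (by linarith [hy.2])
    have hsin2 := Real.sin_two_mul y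
    have hcos2 := Real.cos_two_mul y
    have hpy := Real.sin_sq_add_cos_sq y
    have hy3 : y * Real.sin y ^ 2 + y * Real.cos y ^ 2 = y := by
      linear_combination y * hpy
    rw [hsin2, hcos2] at hk
    push_cast
    nlinarith [hk, hy3]

lemma qq_nonneg {s : ℝ} (h0 : 0 ≤ s) (h1 : s ≤ π) : 0 ≤ qq s := by
  have h := key3 (Set.mem_Icc.mpr ⟨le_refl 0, Real.pi_pos.le⟩) (Set.mem_Icc.mpr ⟨h0, h1⟩) h0
  simp [qq] at h ⊢
  linarith

lemma f_eq {s : ℝ} (hs : s ≠ 0) : fI s = -(Real.sin s ^ 3 * qq s) / s ^ 5 := by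
  unfold fI qq
  field_simp
  ring

lemma f_abs (s : ℝ) : |fI s| ≤ 4 := by
  rcases eq_or_ne s 0 with h | h
  · subst h; simp [fI]
  · have hu1 : |Real.sin s / s| ≤ 1 := by
      rw [abs_div]
      exact div_le_one_of_le₀ (Real.abs_sin_lt_abs h).le (abs_nonneg s)
    have heq : fI s = 2 * (Real.sin s / s) ^ 5 - Real.cos s * (Real.sin s / s) ^ 4
        - (Real.sin s / s) ^ 3 := by
      unfold fI; field_simp
    set u := Real.sin s / s with hu
    have hub : u ≤ 1 := (abs_le.mp hu1).2
    have hua : -1 ≤ u := (abs_le.mp hu1).1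
    have hc1 : -1 ≤ Real.cos s := Real.neg_one_le_cos s
    have hc2 : Real.cos s ≤ 1 := Real.cos_le_one s
    have h2 : u ^ 2 ≤ 1 := by nlinarith
    have h4 : u ^ 4 ≤ 1 := by nlinarith [sq_nonneg (u ^ 2)]
    have h40 : 0 ≤ u ^ 4 := by positivity
    have h5u : u ^ 5 ≤ 1 := by nlinarith [mul_nonneg (sub_nonneg.mpr hub) h40]
    have h5l : -1 ≤ u ^ 5 := by nlinarith [mul_nonneg (by linarith : (0:ℝ) ≤ 1 + u) h40]
    have h3u : u ^ 3 ≤ 1 := by nlinarith [sq_nonneg u, mul_nonneg (sub_nonneg.mpr hub) (sq_nonneg u)]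
    have h3l : -1 ≤ u ^ 3 := by nlinarith [mul_nonneg (by linarith : (0:ℝ) ≤ 1 + u) (sq_nonneg u)]
    have hcu : Real.cos s * u ^ 4 ≤ 1 := by nlinarith
    have hcl : -1 ≤ Real.cos s * u ^ 4 := by nlinarith
    rw [heq, abs_le]
    constructor <;> linarith

lemma f_intble (a b : ℝ) : IntervalIntegrable fI MeasureTheory.volume a b := by
  have hm : Measurable fI := by
    unfold fI
    apply Measurable.sub
    apply Measurable.sub
    · exact (measurable_const.mul (Real.measurable_sin.pow measurable_const)).div
        (measurable_id.pow measurable_const)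
    · exact (Real.measurable_cos.mul (Real.measurable_sin.pow measurable_const)).div
        (measurable_id.pow measurable_const)
    · exact (Real.measurable_sin.pow measurable_const).div (measurable_id.pow measurable_const)
  apply IntervalIntegrable.mono_fun (intervalIntegrable_const (c := (4:ℝ)))
    hm.aestronglyMeasurable
  filter_upwards with s
  rw [Real.norm_eq_abs, Real.norm_eq_abs]
  calc |fI s| ≤ 4 := f_abs s
    _ ≤ |4| := le_abs_self 4
lemma neg_slab {a b c : ℝ} (ha : 0 < a) (hab : a ≤ b) (hb : b ≤ π) (hc : 0 ≤ c)
    (hq : c * b ^ 5 ≤ qq a) :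
    ∫ s in a..b, fI s ≤
      -c * (Real.cos a - Real.cos b - (Real.cos a ^ 3 - Real.cos b ^ 3) / 3) := by
  have hle : ∫ s in a..b, fI s ≤ ∫ s in a..b, -c * Real.sin s ^ 3 := by
    apply intervalIntegral.integral_mono_on hab (f_intble a b)
      ((continuous_const.mul (Real.continuous_sin.pow 3)).intervalIntegrable _ _)
    intro s hs
    obtain ⟨hs1, hs2⟩ := hs
    have hs0 : 0 < s := lt_of_lt_of_le ha hs1
    have hsp : s ≤ π := hs2.trans hb
    have hsin : 0 ≤ Real.sin s := Real.sin_nonneg_of_nonneg_of_le_pi hs0.le hsp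
    have hqm : qq a ≤ qq s :=
      key3 (Set.mem_Icc.mpr ⟨ha.le, hab.trans hb⟩) (Set.mem_Icc.mpr ⟨hs0.le, hsp⟩) hs1
    have hs5 : s ^ 5 ≤ b ^ 5 := pow_le_pow_left₀ hs0.le hs2 5
    have hq2 : c * s ^ 5 ≤ qq s := by nlinarith
    rw [f_eq hs0.ne', div_le_iff₀ (pow_pos hs0 5)]
    simp only [Pi.mul_apply, Pi.pow_apply]
    nlinarith [mul_nonneg (pow_nonneg hsin 3) (sub_nonneg.mpr hq2)]
  rw [intervalIntegral.integral_const_mul, integral_sin_pow_three] at hle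
  linarith

lemma pos_slab {a b d : ℝ} (hpa : π ≤ a) (hab : a ≤ b) (hb : b ≤ 2 * π)
    (hd : 1 / a ^ 3 + 1 / (2 * a ^ 4) ≤ d) :
    ∫ s in a..b, fI s ≤
      -d * (Real.cos a - Real.cos b - (Real.cos a ^ 3 - Real.cos b ^ 3) / 3) := by
  have ha : 0 < a := lt_of_lt_of_le Real.pi_pos hpa
  have hle : ∫ s in a..b, fI s ≤ ∫ s in a..b, -d * Real.sin s ^ 3 := by
    apply intervalIntegral.integral_mono_on hab (f_intble a b)
      ((continuous_const.mul (Real.continuous_sin.pow 3)).intervalIntegrable _ _)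
    intro s hs
    obtain ⟨hs1, hs2⟩ := hs
    have hs0 : 0 < s := lt_of_lt_of_le ha hs1
    have hsin : Real.sin s ≤ 0 := by
      have h1 : Real.sin (s - 2 * π) ≤ 0 :=
        Real.sin_nonpos_of_nonpos_of_neg_pi_le (by linarith [hs2.trans hb])
          (by linarith [hpa.trans hs1])
      rwa [Real.sin_sub_two_pi] at h1
    have hsc : Real.sin s * Real.cos s ≤ 1 / 2 := by
      have h1 := Real.sin_le_one (2 * s)
      rw [Real.sin_two_mul] at h1
      linarith
    have hqub : qq s ≤ s ^ 2 + s / 2 := by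
      unfold qq
      nlinarith [sq_nonneg (Real.sin s), mul_le_mul_of_nonneg_left hsc hs0.le]
    have hds : s ^ 2 + s / 2 ≤ d * s ^ 5 := by
      have h3 : 1 / s ^ 3 ≤ 1 / a ^ 3 :=
        one_div_le_one_div_of_le (pow_pos ha 3) (pow_le_pow_left₀ ha.le hs1 3)
      have h4 : 1 / (2 * s ^ 4) ≤ 1 / (2 * a ^ 4) := by
        apply one_div_le_one_div_of_le (by positivity)
        have := pow_le_pow_left₀ ha.le hs1 4
        linarith
      have hsum : 1 / s ^ 3 + 1 / (2 * s ^ 4) ≤ d := by linarith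
      have hmul := mul_le_mul_of_nonneg_right hsum (le_of_lt (pow_pos hs0 5))
      have heq : (1 / s ^ 3 + 1 / (2 * s ^ 4)) * s ^ 5 = s ^ 2 + s / 2 := by
        field_simp
      linarith [heq ▸ hmul]
    have hns : 0 ≤ -Real.sin s ^ 3 := by nlinarith [sq_nonneg (Real.sin s)]
    rw [f_eq hs0.ne', div_le_iff₀ (pow_pos hs0 5)]
    simp only [Pi.mul_apply, Pi.pow_apply]
    nlinarith [mul_nonneg hns (sub_nonneg.mpr (hqub.trans hds))]
  rw [intervalIntegral.integral_const_mul, integral_sin_pow_three] at hle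
  linarith

lemma zero_slab {a b : ℝ} (h0 : 0 ≤ a) (hab : a ≤ b) (hb : b ≤ π) :
    ∫ s in a..b, fI s ≤ 0 := by
  have hle : ∫ s in a..b, fI s ≤ ∫ s in a..b, (0 : ℝ) := by
    apply intervalIntegral.integral_mono_on hab (f_intble a b) intervalIntegrable_const
    intro s hs
    obtain ⟨hs1, hs2⟩ := hs
    rcases eq_or_lt_of_le (h0.trans hs1) with h | h
    · simp [fI, ← h]
    · have hsp : s ≤ π := hs2.trans hb
      have hsin : 0 ≤ Real.sin s := Real.sin_nonneg_of_nonneg_of_le_pi h.le hsp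
      have hq := qq_nonneg h.le hsp
      rw [f_eq h.ne']
      apply div_nonpos_of_nonpos_of_nonneg
      · nlinarith [mul_nonneg (pow_nonneg hsin 3) hq]
      · positivity
  simpa using hle

lemma phi_le {u w : ℝ} (h : u ≤ w) (hu : -1 ≤ u) (hw : w ≤ 1) :
    u - u ^ 3 / 3 ≤ w - w ^ 3 / 3 := by
  have h1 : u ≤ 1 := h.trans hw
  have h2 : -1 ≤ w := hu.trans h
  have hfac : 0 ≤ 3 - u ^ 2 - u * w - w ^ 2 := by
    nlinarith [sq_nonneg (u - w), mul_nonneg (sub_nonneg.mpr h1) (by linarith : (0:ℝ) ≤ 1 + u),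
      mul_nonneg (sub_nonneg.mpr hw) (by linarith : (0:ℝ) ≤ 1 + w)]
  nlinarith [mul_nonneg (sub_nonneg.mpr h) hfac]

lemma sqrt2_gt : (1.4142135 : ℝ) < Real.sqrt 2 := by
  nlinarith [Real.sq_sqrt (by norm_num : (0:ℝ) ≤ 2), Real.sqrt_nonneg 2]

lemma sqrt2_lt : Real.sqrt 2 < 1.4142136 := by
  nlinarith [Real.sq_sqrt (by norm_num : (0:ℝ) ≤ 2), Real.sqrt_nonneg 2]

lemma sqrt3_gt : (1.7320508 : ℝ) < Real.sqrt 3 := by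
  nlinarith [Real.sq_sqrt (by norm_num : (0:ℝ) ≤ 3), Real.sqrt_nonneg 3]

lemma sqrt3_lt : Real.sqrt 3 < 1.7320509 := by
  nlinarith [Real.sq_sqrt (by norm_num : (0:ℝ) ≤ 3), Real.sqrt_nonneg 3]

lemma sqrt6_gt : (2.4494897 : ℝ) < Real.sqrt 6 := by
  nlinarith [Real.sq_sqrt (by norm_num : (0:ℝ) ≤ 6), Real.sqrt_nonneg 6]

lemma sqrt6_lt : Real.sqrt 6 < 2.4494898 := by
  nlinarith [Real.sq_sqrt (by norm_num : (0:ℝ) ≤ 6), Real.sqrt_nonneg 6]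

lemma sqrt62 : Real.sqrt 6 * Real.sqrt 2 = 2 * Real.sqrt 3 := by
  rw [show (6:ℝ) = 2 * 3 by norm_num, Real.sqrt_mul (by norm_num : (0:ℝ) ≤ 2)]
  have h2 : Real.sqrt 2 * Real.sqrt 2 = 2 := Real.mul_self_sqrt (by norm_num)
  linear_combination Real.sqrt 3 * h2
lemma sqrt32 : Real.sqrt 3 * Real.sqrt 2 = Real.sqrt 6 := by
  rw [← Real.sqrt_mul (by norm_num : (0:ℝ) ≤ 3)]
  norm_num

lemma cos_pi12 : Real.cos (π / 12) = (Real.sqrt 6 + Real.sqrt 2) / 4 := by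
  rw [show π / 12 = π / 3 - π / 4 by ring, Real.cos_sub, Real.cos_pi_div_three,
    Real.sin_pi_div_three, Real.cos_pi_div_four, Real.sin_pi_div_four]
  linear_combination sqrt32 / 4

lemma sin_pi12 : Real.sin (π / 12) = (Real.sqrt 6 - Real.sqrt 2) / 4 := by
  rw [show π / 12 = π / 3 - π / 4 by ring, Real.sin_sub, Real.cos_pi_div_three,
    Real.sin_pi_div_three, Real.cos_pi_div_four, Real.sin_pi_div_four]
  linear_combination sqrt32 / 4

lemma cos_5pi12 : Real.cos (5 * π / 12) = (Real.sqrt 6 - Real.sqrt 2) / 4 := by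
  rw [show 5 * π / 12 = π / 2 - π / 12 by ring, Real.cos_pi_div_two_sub, sin_pi12]

lemma sin_5pi12 : Real.sin (5 * π / 12) = (Real.sqrt 6 + Real.sqrt 2) / 4 := by
  rw [show 5 * π / 12 = π / 2 - π / 12 by ring, Real.sin_pi_div_two_sub, cos_pi12]

lemma cos_7pi12 : Real.cos (7 * π / 12) = -((Real.sqrt 6 - Real.sqrt 2) / 4) := by
  rw [show 7 * π / 12 = π - 5 * π / 12 by ring, Real.cos_pi_sub, cos_5pi12]

lemma sin_7pi12 : Real.sin (7 * π / 12) = (Real.sqrt 6 + Real.sqrt 2) / 4 := by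
  rw [show 7 * π / 12 = π - 5 * π / 12 by ring, Real.sin_pi_sub, sin_5pi12]

lemma cos_2pi3 : Real.cos (2 * π / 3) = -(1 / 2) := by
  rw [show 2 * π / 3 = π - π / 3 by ring, Real.cos_pi_sub, Real.cos_pi_div_three]

lemma sin_2pi3 : Real.sin (2 * π / 3) = Real.sqrt 3 / 2 := by
  rw [show 2 * π / 3 = π - π / 3 by ring, Real.sin_pi_sub, Real.sin_pi_div_three]

lemma cos_3pi4 : Real.cos (3 * π / 4) = -(Real.sqrt 2 / 2) := by
  rw [show 3 * π / 4 = π - π / 4 by ring, Real.cos_pi_sub, Real.cos_pi_div_four]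

lemma sin_3pi4 : Real.sin (3 * π / 4) = Real.sqrt 2 / 2 := by
  rw [show 3 * π / 4 = π - π / 4 by ring, Real.sin_pi_sub, Real.sin_pi_div_four]

lemma cos_5pi6 : Real.cos (5 * π / 6) = -(Real.sqrt 3 / 2) := by
  rw [show 5 * π / 6 = π - π / 6 by ring, Real.cos_pi_sub, Real.cos_pi_div_six]

lemma sin_5pi6 : Real.sin (5 * π / 6) = 1 / 2 := by
  rw [show 5 * π / 6 = π - π / 6 by ring, Real.sin_pi_sub, Real.sin_pi_div_six]

lemma cos_11pi12 : Real.cos (11 * π / 12) = -((Real.sqrt 6 + Real.sqrt 2) / 4) := by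
  rw [show 11 * π / 12 = π - π / 12 by ring, Real.cos_pi_sub, cos_pi12]

lemma cos_7pi6 : Real.cos (7 * π / 6) = -(Real.sqrt 3 / 2) := by
  rw [show 7 * π / 6 = 2 * π - 5 * π / 6 by ring, Real.cos_two_pi_sub, cos_5pi6]

lemma cos_4pi3 : Real.cos (4 * π / 3) = -(1 / 2) := by
  rw [show 4 * π / 3 = 2 * π - 2 * π / 3 by ring, Real.cos_two_pi_sub, cos_2pi3]

lemma cos_3pi2 : Real.cos (3 * π / 2) = 0 := by
  rw [show 3 * π / 2 = 2 * π - π / 2 by ring, Real.cos_two_pi_sub, Real.cos_pi_div_two]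

lemma cos_5pi3 : Real.cos (5 * π / 3) = 1 / 2 := by
  rw [show 5 * π / 3 = 2 * π - π / 3 by ring, Real.cos_two_pi_sub, Real.cos_pi_div_three]

lemma cos_11pi6 : Real.cos (11 * π / 6) = Real.sqrt 3 / 2 := by
  rw [show 11 * π / 6 = 2 * π - π / 6 by ring, Real.cos_two_pi_sub, Real.cos_pi_div_six]
lemma pi2_gt : (9.8696002 : ℝ) < π ^ 2 := by
  nlinarith [Real.pi_gt_d6]

lemma pi5_lt : π ^ 5 < 306.0199 := by
  have h : π ^ 5 < 3.141593 ^ 5 := pow_lt_pow_left₀ Real.pi_lt_d6 Real.pi_pos.le (by norm_num)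
  calc π ^ 5 < 3.141593 ^ 5 := h
    _ ≤ 306.0199 := by norm_num

lemma pis3_gt : (5.441395 : ℝ) < π * Real.sqrt 3 := by
  nlinarith [Real.pi_gt_d6, sqrt3_gt, Real.pi_lt_d6, sqrt3_lt]

lemma pis3_lt : π * Real.sqrt 3 < 5.4414 := by
  nlinarith [Real.pi_gt_d6, sqrt3_gt, Real.pi_lt_d6, sqrt3_lt]

lemma qk3 : (0.0075 : ℝ) * (π / 3) ^ 5 ≤ qq (π / 4) := by
  unfold qq
  have h2 : Real.sqrt 2 * Real.sqrt 2 = 2 := Real.mul_self_sqrt (by norm_num)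
  have hsc : Real.sin (π / 4) * Real.cos (π / 4) = 1 / 2 := by
    rw [Real.sin_pi_div_four, Real.cos_pi_div_four]; linear_combination h2 / 4
  have hss : Real.sin (π / 4) ^ 2 = 1 / 2 := by
    rw [Real.sin_pi_div_four]; rw [div_pow, Real.sq_sqrt] <;> norm_num
  rw [mul_assoc, hsc, hss]
  nlinarith [pi2_gt, pi5_lt, Real.pi_gt_d6]

lemma qk4 : (0.013 : ℝ) * (5 * π / 12) ^ 5 ≤ qq (π / 3) := by
  unfold qq
  have hsc : Real.sin (π / 3) * Real.cos (π / 3) = Real.sqrt 3 / 4 := by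
    rw [Real.sin_pi_div_three, Real.cos_pi_div_three]; ring
  have hss : Real.sin (π / 3) ^ 2 = 3 / 4 := by
    rw [Real.sin_pi_div_three]; rw [div_pow, Real.sq_sqrt] <;> norm_num
  rw [mul_assoc, hsc, hss]
  nlinarith [pi2_gt, pi5_lt, pis3_gt]

lemma qk5 : (0.0182 : ℝ) * (π / 2) ^ 5 ≤ qq (5 * π / 12) := by
  unfold qq
  have h2 : Real.sqrt 2 * Real.sqrt 2 = 2 := Real.mul_self_sqrt (by norm_num)
  have h6 : Real.sqrt 6 * Real.sqrt 6 = 6 := Real.mul_self_sqrt (by norm_num)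
  have hsc : Real.sin (5 * π / 12) * Real.cos (5 * π / 12) = 1 / 4 := by
    rw [sin_5pi12, cos_5pi12]; linear_combination (h6 - h2) / 16
  have hss : Real.sin (5 * π / 12) ^ 2 = (2 + Real.sqrt 3) / 4 := by
    rw [sin_5pi12]; linear_combination (h6 + h2) / 16 + sqrt62 / 8
  rw [mul_assoc, hsc, hss]
  nlinarith [pi2_gt, pi5_lt, Real.pi_gt_d6, sqrt3_lt]

lemma qk6 : (0.0226 : ℝ) * (7 * π / 12) ^ 5 ≤ qq (π / 2) := by
  unfold qq
  rw [Real.sin_pi_div_two, Real.cos_pi_div_two]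
  nlinarith [pi2_gt, pi5_lt]

lemma qk7 : (0.0256 : ℝ) * (2 * π / 3) ^ 5 ≤ qq (7 * π / 12) := by
  unfold qq
  have h2 : Real.sqrt 2 * Real.sqrt 2 = 2 := Real.mul_self_sqrt (by norm_num)
  have h6 : Real.sqrt 6 * Real.sqrt 6 = 6 := Real.mul_self_sqrt (by norm_num)
  have hsc : Real.sin (7 * π / 12) * Real.cos (7 * π / 12) = -(1 / 4) := by
    rw [sin_7pi12, cos_7pi12]; linear_combination (h2 - h6) / 16
  have hss : Real.sin (7 * π / 12) ^ 2 = (2 + Real.sqrt 3) / 4 := by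
    rw [sin_7pi12]; linear_combination (h6 + h2) / 16 + sqrt62 / 8
  rw [mul_assoc, hsc, hss]
  nlinarith [pi2_gt, pi5_lt, Real.pi_lt_d6, sqrt3_lt]

lemma qk8 : (0.0272 : ℝ) * (3 * π / 4) ^ 5 ≤ qq (2 * π / 3) := by
  unfold qq
  have hsc : Real.sin (2 * π / 3) * Real.cos (2 * π / 3) = -(Real.sqrt 3 / 4) := by
    rw [sin_2pi3, cos_2pi3]; ring
  have hss : Real.sin (2 * π / 3) ^ 2 = 3 / 4 := by
    rw [sin_2pi3]; rw [div_pow, Real.sq_sqrt] <;> norm_num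
  rw [mul_assoc, hsc, hss]
  nlinarith [pi2_gt, pi5_lt, pis3_lt]

lemma qk9 : (0.0274 : ℝ) * (5 * π / 6) ^ 5 ≤ qq (3 * π / 4) := by
  unfold qq
  have h2 : Real.sqrt 2 * Real.sqrt 2 = 2 := Real.mul_self_sqrt (by norm_num)
  have hsc : Real.sin (3 * π / 4) * Real.cos (3 * π / 4) = -(1 / 2) := by
    rw [sin_3pi4, cos_3pi4]; linear_combination -h2 / 4
  have hss : Real.sin (3 * π / 4) ^ 2 = 1 / 2 := by
    rw [sin_3pi4]; rw [div_pow, Real.sq_sqrt] <;> norm_num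
  rw [mul_assoc, hsc, hss]
  nlinarith [pi2_gt, pi5_lt, Real.pi_lt_d6]

lemma qk10 : (0.0263 : ℝ) * (11 * π / 12) ^ 5 ≤ qq (5 * π / 6) := by
  unfold qq
  have hsc : Real.sin (5 * π / 6) * Real.cos (5 * π / 6) = -(Real.sqrt 3 / 4) := by
    rw [sin_5pi6, cos_5pi6]; ring
  have hss : Real.sin (5 * π / 6) ^ 2 = 1 / 4 := by
    rw [sin_5pi6]; norm_num
  rw [mul_assoc, hsc, hss]
  nlinarith [pi2_gt, pi5_lt, pis3_lt]
set_option maxHeartbeats 2000000 in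
open Real in
theorem stmt_4 :
    ∫ s in (0:ℝ)..(2 * π),
      (2 * sin s ^ 5 / s ^ 5 - cos s * sin s ^ 4 / s ^ 4 - sin s ^ 3 / s ^ 3) < 0 := by
  have hpi := Real.pi_pos
  have B0 : ∫ s in (0:ℝ)..(π/4), fI s ≤ 0 :=
    zero_slab le_rfl (by positivity) (by linarith)
  have B9 : ∫ s in (11*π/12)..π, fI s ≤ 0 :=
    zero_slab (by positivity) (by linarith) le_rfl
  have B1 : ∫ s in (π/4)..(π/3), fI s ≤ (-0.000981 : ℝ) := by
    have h := neg_slab (a := π/4) (b := π/3) (c := 0.0075)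
      (by positivity) (by linarith) (by linarith) (by norm_num) qk3
    rw [Real.cos_pi_div_four, Real.cos_pi_div_three] at h
    have hA := phi_le (u := (0.7071067 : ℝ)) (w := Real.sqrt 2/2)
      (by nlinarith [sqrt2_gt, sqrt2_lt, sqrt3_gt, sqrt3_lt, sqrt6_gt, sqrt6_lt]) (by norm_num) (by nlinarith [sqrt2_gt, sqrt2_lt, sqrt3_gt, sqrt3_lt, sqrt6_gt, sqrt6_lt])
    linarith [h, hA]
  have B2 : ∫ s in (π/3)..(5*π/12), fI s ≤ (-0.002668 : ℝ) := by
    have h := neg_slab (a := π/3) (b := 5*π/12) (c := 0.013)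
      (by positivity) (by linarith) (by linarith) (by norm_num) qk4
    rw [Real.cos_pi_div_three, cos_5pi12] at h
    have hB := phi_le (u := (Real.sqrt 6 - Real.sqrt 2)/4) (w := (0.2588191 : ℝ))
      (by nlinarith [sqrt2_gt, sqrt2_lt, sqrt3_gt, sqrt3_lt, sqrt6_gt, sqrt6_lt]) (by nlinarith [sqrt2_gt, sqrt2_lt, sqrt3_gt, sqrt3_lt, sqrt6_gt, sqrt6_lt]) (by norm_num)
    linarith [h, hB]
  have B3 : ∫ s in (5*π/12)..(π/2), fI s ≤ (-0.004605 : ℝ) := by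
    have h := neg_slab (a := 5*π/12) (b := π/2) (c := 0.0182)
      (by positivity) (by linarith) (by linarith) (by norm_num) qk5
    rw [cos_5pi12, Real.cos_pi_div_two] at h
    have hA := phi_le (u := (0.258819 : ℝ)) (w := (Real.sqrt 6 - Real.sqrt 2)/4)
      (by nlinarith [sqrt2_gt, sqrt2_lt, sqrt3_gt, sqrt3_lt, sqrt6_gt, sqrt6_lt]) (by norm_num) (by nlinarith [sqrt2_gt, sqrt2_lt, sqrt3_gt, sqrt3_lt, sqrt6_gt, sqrt6_lt])
    linarith [h, hA]
  have B4 : ∫ s in (π/2)..(7*π/12), fI s ≤ (-0.005718 : ℝ) := by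
    have h := neg_slab (a := π/2) (b := 7*π/12) (c := 0.0226)
      (by positivity) (by linarith) (by linarith) (by norm_num) qk6
    rw [Real.cos_pi_div_two, cos_7pi12] at h
    have hB := phi_le (u := -((Real.sqrt 6 - Real.sqrt 2)/4)) (w := (-0.258819 : ℝ))
      (by nlinarith [sqrt2_gt, sqrt2_lt, sqrt3_gt, sqrt3_lt, sqrt6_gt, sqrt6_lt]) (by nlinarith [sqrt2_gt, sqrt2_lt, sqrt3_gt, sqrt3_lt, sqrt6_gt, sqrt6_lt]) (by norm_num)
    linarith [h, hB]
  have B5 : ∫ s in (7*π/12)..(2*π/3), fI s ≤ (-0.005255 : ℝ) := by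
    have h := neg_slab (a := 7*π/12) (b := 2*π/3) (c := 0.0256)
      (by positivity) (by linarith) (by linarith) (by norm_num) qk7
    rw [cos_7pi12, cos_2pi3] at h
    have hA := phi_le (u := (-0.2588191 : ℝ)) (w := -((Real.sqrt 6 - Real.sqrt 2)/4))
      (by nlinarith [sqrt2_gt, sqrt2_lt, sqrt3_gt, sqrt3_lt, sqrt6_gt, sqrt6_lt]) (by norm_num) (by nlinarith [sqrt2_gt, sqrt2_lt, sqrt3_gt, sqrt3_lt, sqrt6_gt, sqrt6_lt])
    linarith [h, hA]
  have B6 : ∫ s in (2*π/3)..(3*π/4), fI s ≤ (-0.003561 : ℝ) := by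
    have h := neg_slab (a := 2*π/3) (b := 3*π/4) (c := 0.0272)
      (by positivity) (by linarith) (by linarith) (by norm_num) qk8
    rw [cos_2pi3, cos_3pi4] at h
    have hB := phi_le (u := -(Real.sqrt 2/2)) (w := (-0.7071067 : ℝ))
      (by nlinarith [sqrt2_gt, sqrt2_lt, sqrt3_gt, sqrt3_lt, sqrt6_gt, sqrt6_lt]) (by nlinarith [sqrt2_gt, sqrt2_lt, sqrt3_gt, sqrt3_lt, sqrt6_gt, sqrt6_lt]) (by norm_num)
    linarith [h, hB]
  have B7 : ∫ s in (3*π/4)..(5*π/6), fI s ≤ (-0.001651 : ℝ) := by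
    have h := neg_slab (a := 3*π/4) (b := 5*π/6) (c := 0.0274)
      (by positivity) (by linarith) (by linarith) (by norm_num) qk9
    rw [cos_3pi4, cos_5pi6] at h
    have hA := phi_le (u := (-0.7071068 : ℝ)) (w := -(Real.sqrt 2/2))
      (by nlinarith [sqrt2_gt, sqrt2_lt, sqrt3_gt, sqrt3_lt, sqrt6_gt, sqrt6_lt]) (by norm_num) (by nlinarith [sqrt2_gt, sqrt2_lt, sqrt3_gt, sqrt3_lt, sqrt6_gt, sqrt6_lt])
    have hB := phi_le (u := -(Real.sqrt 3/2)) (w := (-0.8660254 : ℝ))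
      (by nlinarith [sqrt2_gt, sqrt2_lt, sqrt3_gt, sqrt3_lt, sqrt6_gt, sqrt6_lt]) (by nlinarith [sqrt2_gt, sqrt2_lt, sqrt3_gt, sqrt3_lt, sqrt6_gt, sqrt6_lt]) (by norm_num)
    linarith [h, hA, hB]
  have B8 : ∫ s in (5*π/6)..(11*π/12), fI s ≤ (-0.00042 : ℝ) := by
    have h := neg_slab (a := 5*π/6) (b := 11*π/12) (c := 0.0263)
      (by positivity) (by linarith) (by linarith) (by norm_num) qk10
    rw [cos_5pi6, cos_11pi12] at h
    have hA := phi_le (u := (-0.8660255 : ℝ)) (w := -(Real.sqrt 3/2))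
      (by nlinarith [sqrt2_gt, sqrt2_lt, sqrt3_gt, sqrt3_lt, sqrt6_gt, sqrt6_lt]) (by norm_num) (by nlinarith [sqrt2_gt, sqrt2_lt, sqrt3_gt, sqrt3_lt, sqrt6_gt, sqrt6_lt])
    have hB := phi_le (u := -((Real.sqrt 6 + Real.sqrt 2)/4)) (w := (-0.9659258 : ℝ))
      (by nlinarith [sqrt2_gt, sqrt2_lt, sqrt3_gt, sqrt3_lt, sqrt6_gt, sqrt6_lt]) (by nlinarith [sqrt2_gt, sqrt2_lt, sqrt3_gt, sqrt3_lt, sqrt6_gt, sqrt6_lt]) (by norm_num)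
    linarith [h, hA, hB]
  have B10 : ∫ s in (π)..(7*π/6), fI s ≤ (0.000642 : ℝ) := by
    have hd : 1/(π)^3 + 1/(2*(π)^4) ≤ (0.0374 : ℝ) := by
      have h1 : (3.141592 : ℝ) < π := by linarith [Real.pi_gt_d6]
      have h3 : (3.141592 : ℝ)^3 < (π)^3 := pow_lt_pow_left₀ h1 (by norm_num) (by norm_num)
      have h4 : (3.141592 : ℝ)^4 < (π)^4 := pow_lt_pow_left₀ h1 (by norm_num) (by norm_num)
      have hi3 : 1/(π)^3 ≤ 1/(3.141592 : ℝ)^3 := one_div_le_one_div_of_le (by norm_num) h3.le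
      have hi4 : 1/(2*(π)^4) ≤ 1/(2*(3.141592 : ℝ)^4) := one_div_le_one_div_of_le (by norm_num) (by linarith)
      have : 1/(3.141592 : ℝ)^3 + 1/(2*(3.141592 : ℝ)^4) ≤ (0.0374 : ℝ) := by norm_num
      linarith
    have h := pos_slab (a := π) (b := 7*π/6) (d := 0.0374)
      (by linarith) (by linarith) (by linarith) hd
    rw [Real.cos_pi, cos_7pi6] at h
    have hB := phi_le (u := -(Real.sqrt 3/2)) (w := (-0.8660254 : ℝ))
      (by nlinarith [sqrt2_gt, sqrt2_lt, sqrt3_gt, sqrt3_lt, sqrt6_gt, sqrt6_lt]) (by nlinarith [sqrt2_gt, sqrt2_lt, sqrt3_gt, sqrt3_lt, sqrt6_gt, sqrt6_lt]) (by norm_num)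
    linarith [h, hB]
  have B11 : ∫ s in (7*π/6)..(4*π/3), fI s ≤ (0.004417 : ℝ) := by
    have hd : 1/(7*π/6)^3 + 1/(2*(7*π/6)^4) ≤ (0.0231 : ℝ) := by
      have h1 : (3.6651906 : ℝ) < 7*π/6 := by linarith [Real.pi_gt_d6]
      have h3 : (3.6651906 : ℝ)^3 < (7*π/6)^3 := pow_lt_pow_left₀ h1 (by norm_num) (by norm_num)
      have h4 : (3.6651906 : ℝ)^4 < (7*π/6)^4 := pow_lt_pow_left₀ h1 (by norm_num) (by norm_num)
      have hi3 : 1/(7*π/6)^3 ≤ 1/(3.6651906 : ℝ)^3 := one_div_le_one_div_of_le (by norm_num) h3.le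
      have hi4 : 1/(2*(7*π/6)^4) ≤ 1/(2*(3.6651906 : ℝ)^4) := one_div_le_one_div_of_le (by norm_num) (by linarith)
      have : 1/(3.6651906 : ℝ)^3 + 1/(2*(3.6651906 : ℝ)^4) ≤ (0.0231 : ℝ) := by norm_num
      linarith
    have h := pos_slab (a := 7*π/6) (b := 4*π/3) (d := 0.0231)
      (by linarith) (by linarith) (by linarith) hd
    rw [cos_7pi6, cos_4pi3] at h
    have hA := phi_le (u := (-0.8660255 : ℝ)) (w := -(Real.sqrt 3/2))
      (by nlinarith [sqrt2_gt, sqrt2_lt, sqrt3_gt, sqrt3_lt, sqrt6_gt, sqrt6_lt]) (by norm_num) (by nlinarith [sqrt2_gt, sqrt2_lt, sqrt3_gt, sqrt3_lt, sqrt6_gt, sqrt6_lt])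
    linarith [h, hA]
  have B12 : ∫ s in (4*π/3)..(3*π/2), fI s ≤ (0.007013 : ℝ) := by
    have hd : 1/(4*π/3)^3 + 1/(2*(4*π/3)^4) ≤ (0.0153 : ℝ) := by
      have h1 : (4.1887893 : ℝ) < 4*π/3 := by linarith [Real.pi_gt_d6]
      have h3 : (4.1887893 : ℝ)^3 < (4*π/3)^3 := pow_lt_pow_left₀ h1 (by norm_num) (by norm_num)
      have h4 : (4.1887893 : ℝ)^4 < (4*π/3)^4 := pow_lt_pow_left₀ h1 (by norm_num) (by norm_num)
      have hi3 : 1/(4*π/3)^3 ≤ 1/(4.1887893 : ℝ)^3 := one_div_le_one_div_of_le (by norm_num) h3.le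
      have hi4 : 1/(2*(4*π/3)^4) ≤ 1/(2*(4.1887893 : ℝ)^4) := one_div_le_one_div_of_le (by norm_num) (by linarith)
      have : 1/(4.1887893 : ℝ)^3 + 1/(2*(4.1887893 : ℝ)^4) ≤ (0.0153 : ℝ) := by norm_num
      linarith
    have h := pos_slab (a := 4*π/3) (b := 3*π/2) (d := 0.0153)
      (by linarith) (by linarith) (by linarith) hd
    rw [cos_4pi3, cos_3pi2] at h
    linarith [h]
  have B13 : ∫ s in (3*π/2)..(5*π/3), fI s ≤ (0.004859 : ℝ) := by
    have hd : 1/(3*π/2)^3 + 1/(2*(3*π/2)^4) ≤ (0.0106 : ℝ) := by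
      have h1 : (4.712388 : ℝ) < 3*π/2 := by linarith [Real.pi_gt_d6]
      have h3 : (4.712388 : ℝ)^3 < (3*π/2)^3 := pow_lt_pow_left₀ h1 (by norm_num) (by norm_num)
      have h4 : (4.712388 : ℝ)^4 < (3*π/2)^4 := pow_lt_pow_left₀ h1 (by norm_num) (by norm_num)
      have hi3 : 1/(3*π/2)^3 ≤ 1/(4.712388 : ℝ)^3 := one_div_le_one_div_of_le (by norm_num) h3.le
      have hi4 : 1/(2*(3*π/2)^4) ≤ 1/(2*(4.712388 : ℝ)^4) := one_div_le_one_div_of_le (by norm_num) (by linarith)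
      have : 1/(4.712388 : ℝ)^3 + 1/(2*(4.712388 : ℝ)^4) ≤ (0.0106 : ℝ) := by norm_num
      linarith
    have h := pos_slab (a := 3*π/2) (b := 5*π/3) (d := 0.0106)
      (by linarith) (by linarith) (by linarith) hd
    rw [cos_3pi2, cos_5pi3] at h
    linarith [h]
  have B14 : ∫ s in (5*π/3)..(11*π/6), fI s ≤ (0.001473 : ℝ) := by
    have hd : 1/(5*π/3)^3 + 1/(2*(5*π/3)^4) ≤ (0.0077 : ℝ) := by
      have h1 : (5.2359866 : ℝ) < 5*π/3 := by linarith [Real.pi_gt_d6]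
      have h3 : (5.2359866 : ℝ)^3 < (5*π/3)^3 := pow_lt_pow_left₀ h1 (by norm_num) (by norm_num)
      have h4 : (5.2359866 : ℝ)^4 < (5*π/3)^4 := pow_lt_pow_left₀ h1 (by norm_num) (by norm_num)
      have hi3 : 1/(5*π/3)^3 ≤ 1/(5.2359866 : ℝ)^3 := one_div_le_one_div_of_le (by norm_num) h3.le
      have hi4 : 1/(2*(5*π/3)^4) ≤ 1/(2*(5.2359866 : ℝ)^4) := one_div_le_one_div_of_le (by norm_num) (by linarith)
      have : 1/(5.2359866 : ℝ)^3 + 1/(2*(5.2359866 : ℝ)^4) ≤ (0.0077 : ℝ) := by norm_num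
      linarith
    have h := pos_slab (a := 5*π/3) (b := 11*π/6) (d := 0.0077)
      (by linarith) (by linarith) (by linarith) hd
    rw [cos_5pi3, cos_11pi6] at h
    have hB := phi_le (u := Real.sqrt 3/2) (w := (0.8660255 : ℝ))
      (by nlinarith [sqrt2_gt, sqrt2_lt, sqrt3_gt, sqrt3_lt, sqrt6_gt, sqrt6_lt]) (by nlinarith [sqrt2_gt, sqrt2_lt, sqrt3_gt, sqrt3_lt, sqrt6_gt, sqrt6_lt]) (by norm_num)
    linarith [h, hB]
  have B15 : ∫ s in (11*π/6)..(2*π), fI s ≤ (0.000098 : ℝ) := by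
    have hd : 1/(11*π/6)^3 + 1/(2*(11*π/6)^4) ≤ (0.0057 : ℝ) := by
      have h1 : (5.7595853 : ℝ) < 11*π/6 := by linarith [Real.pi_gt_d6]
      have h3 : (5.7595853 : ℝ)^3 < (11*π/6)^3 := pow_lt_pow_left₀ h1 (by norm_num) (by norm_num)
      have h4 : (5.7595853 : ℝ)^4 < (11*π/6)^4 := pow_lt_pow_left₀ h1 (by norm_num) (by norm_num)
      have hi3 : 1/(11*π/6)^3 ≤ 1/(5.7595853 : ℝ)^3 := one_div_le_one_div_of_le (by norm_num) h3.le
      have hi4 : 1/(2*(11*π/6)^4) ≤ 1/(2*(5.7595853 : ℝ)^4) := one_div_le_one_div_of_le (by norm_num) (by linarith)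
      have : 1/(5.7595853 : ℝ)^3 + 1/(2*(5.7595853 : ℝ)^4) ≤ (0.0057 : ℝ) := by norm_num
      linarith
    have h := pos_slab (a := 11*π/6) (b := 2*π) (d := 0.0057)
      (by linarith) (by linarith) (by linarith) hd
    rw [cos_11pi6, Real.cos_two_pi] at h
    have hA := phi_le (u := (0.8660254 : ℝ)) (w := Real.sqrt 3/2)
      (by nlinarith [sqrt2_gt, sqrt2_lt, sqrt3_gt, sqrt3_lt, sqrt6_gt, sqrt6_lt]) (by norm_num) (by nlinarith [sqrt2_gt, sqrt2_lt, sqrt3_gt, sqrt3_lt, sqrt6_gt, sqrt6_lt])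
    linarith [h, hA]
  -- merge all pieces
  have T0 := B0
  have T1 := add_le_add T0 B1
  rw [intervalIntegral.integral_add_adjacent_intervals (f_intble _ _) (f_intble _ _)] at T1
  have T2 := add_le_add T1 B2
  rw [intervalIntegral.integral_add_adjacent_intervals (f_intble _ _) (f_intble _ _)] at T2
  have T3 := add_le_add T2 B3
  rw [intervalIntegral.integral_add_adjacent_intervals (f_intble _ _) (f_intble _ _)] at T3
  have T4 := add_le_add T3 B4
  rw [intervalIntegral.integral_add_adjacent_intervals (f_intble _ _) (f_intble _ _)] at T4
  have T5 := add_le_add T4 B5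
  rw [intervalIntegral.integral_add_adjacent_intervals (f_intble _ _) (f_intble _ _)] at T5
  have T6 := add_le_add T5 B6
  rw [intervalIntegral.integral_add_adjacent_intervals (f_intble _ _) (f_intble _ _)] at T6
  have T7 := add_le_add T6 B7
  rw [intervalIntegral.integral_add_adjacent_intervals (f_intble _ _) (f_intble _ _)] at T7
  have T8 := add_le_add T7 B8
  rw [intervalIntegral.integral_add_adjacent_intervals (f_intble _ _) (f_intble _ _)] at T8
  have T9 := add_le_add T8 B9
  rw [intervalIntegral.integral_add_adjacent_intervals (f_intble _ _) (f_intble _ _)] at T9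
  have T10 := add_le_add T9 B10
  rw [intervalIntegral.integral_add_adjacent_intervals (f_intble _ _) (f_intble _ _)] at T10
  have T11 := add_le_add T10 B11
  rw [intervalIntegral.integral_add_adjacent_intervals (f_intble _ _) (f_intble _ _)] at T11
  have T12 := add_le_add T11 B12
  rw [intervalIntegral.integral_add_adjacent_intervals (f_intble _ _) (f_intble _ _)] at T12
  have T13 := add_le_add T12 B13
  rw [intervalIntegral.integral_add_adjacent_intervals (f_intble _ _) (f_intble _ _)] at T13
  have T14 := add_le_add T13 B14
  rw [intervalIntegral.integral_add_adjacent_intervals (f_intble _ _) (f_intble _ _)] at T14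
  have T15 := add_le_add T14 B15
  rw [intervalIntegral.integral_add_adjacent_intervals (f_intble _ _) (f_intble _ _)] at T15
  show (∫ s in (0:ℝ)..(2 * π), fI s) < 0
  have h2pi : (2:ℝ)*π = 2*π := rfl
  norm_num at T15
  calc (∫ s in (0:ℝ)..(2 * π), fI s) ≤ _ := T15
    _ < 0 := by norm_num
end

section
/- If n ≥ 3 is an odd integer and i is a nonnegative even integer, then the sum of the integrals of sinⁿ(s)/s^(n-2) over [iπ, (i+1)π] and over [(i+1)π, (i+2)π] is positive. -/
open Real MeasureTheory intervalIntegral Set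

private lemma stmt7_bound (n : ℕ) (hn : 3 ≤ n) (x : ℝ) :
    |Real.sin x ^ n / x ^ (n - 2)| ≤ 1 := by
  rcases eq_or_ne x 0 with rfl | hx
  · rw [zero_pow (by omega), div_zero, abs_zero]; norm_num
  · rw [abs_div, abs_pow, abs_pow]
    rw [div_le_one (by positivity)]
    calc |Real.sin x| ^ n = |Real.sin x| ^ (n - 2) * |Real.sin x| ^ 2 := by
          rw [← pow_add]; congr 1; omega
      _ ≤ |x| ^ (n - 2) * 1 := by
          apply mul_le_mul
          · exact pow_le_pow_left₀ (abs_nonneg _) Real.abs_sin_le_abs _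
          · nlinarith [Real.abs_sin_le_one x, abs_nonneg (Real.sin x)]
          · positivity
          · positivity
      _ = |x| ^ (n - 2) := mul_one _

private lemma stmt7_integrable (n : ℕ) (hn : 3 ≤ n) (a b : ℝ) :
    IntervalIntegrable (fun s => Real.sin s ^ n / s ^ (n - 2)) volume a b := by
  apply (_root_.intervalIntegrable_const (c := (1 : ℝ))).mono_fun'
  · exact (((Real.measurable_sin.pow_const n).div (measurable_id.pow_const (n - 2)))).aestronglyMeasurable
  · filter_upwards with x
    simpa only [Real.norm_eq_abs] using stmt7_bound n hn x

open Real in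
theorem stmt_7 (n : ℕ) (hn : 3 ≤ n) (hodd : Odd n) (i : ℕ) (hi : Even i) :
    0 < (∫ s in (i * π)..((i + 1) * π), sin s ^ n / s ^ (n - 2)) +
        ∫ s in ((i + 1) * π)..((i + 2) * π), sin s ^ n / s ^ (n - 2) := by
  have hπ := Real.pi_pos
  set a : ℝ := i * π with ha
  have ha0 : 0 ≤ a := by positivity
  have hb : (i + 1 : ℝ) * π = a + π := by ring
  have hc : (i + 2 : ℝ) * π = (a + π) + π := by ring
  -- rewrite the second integral by substitution t ↦ t + π
  have hsub : (∫ s in ((i + 1) * π)..((i + 2) * π), sin s ^ n / s ^ (n - 2))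
      = ∫ t in a..(a + π), sin (t + π) ^ n / (t + π) ^ (n - 2) := by
    rw [hb, hc, ← intervalIntegral.integral_comp_add_right
      (fun s => sin s ^ n / s ^ (n - 2)) π]
  have hneg : ∀ t : ℝ, sin (t + π) ^ n / (t + π) ^ (n - 2)
      = -(sin t ^ n / (t + π) ^ (n - 2)) := by
    intro t
    rw [Real.sin_add_pi, hodd.neg_pow, neg_div]
  have h2 : (∫ s in ((i + 1) * π)..((i + 2) * π), sin s ^ n / s ^ (n - 2))
      = -∫ t in a..(a + π), sin t ^ n / (t + π) ^ (n - 2) := by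
    rw [hsub]
    simp_rw [hneg]
    exact intervalIntegral.integral_neg
  -- integrability of the second piece
  have hint2 : IntervalIntegrable (fun t => sin t ^ n / (t + π) ^ (n - 2))
      volume a (a + π) := by
    apply ContinuousOn.intervalIntegrable
    apply ContinuousOn.div
    · exact (Real.continuous_sin.pow n).continuousOn
    · exact (continuous_pow (n - 2)).comp (continuous_id.add continuous_const) |>.continuousOn
    · intro x hx
      rw [Set.uIcc_of_le (by linarith)] at hx
      have hx0 : 0 ≤ x := le_trans ha0 hx.1
      have : (0 : ℝ) < x + π := by linarith
      positivity
  have hint1 : IntervalIntegrable (fun s => sin s ^ n / s ^ (n - 2))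
      volume a (a + π) := stmt7_integrable n hn a (a + π)
  rw [h2, hb, ← sub_eq_add_neg, ← intervalIntegral.integral_sub hint1 hint2]
  apply intervalIntegral.intervalIntegral_pos_of_pos_on (hint1.sub hint2)
  · intro x hx
    obtain ⟨k, hk⟩ := hi
    have hx0 : 0 < x := lt_of_le_of_lt ha0 hx.1
    have hsinx : 0 < sin x := by
      have hxa : x = (x - a) + k * (2 * π) := by
        rw [ha, hk]; push_cast; ring
      have : sin x = sin (x - a) := by
        conv_lhs => rw [hxa]
        exact Real.sin_add_nat_mul_two_pi _ k
      rw [this]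
      apply Real.sin_pos_of_pos_of_lt_pi <;> [linarith [hx.1]; linarith [hx.2]]
    have hs : 0 < sin x ^ n := pow_pos hsinx n
    have hlt : x ^ (n - 2) < (x + π) ^ (n - 2) := by
      apply pow_lt_pow_left₀ (by linarith) hx0.le (by omega)
    have h1 : sin x ^ n / (x + π) ^ (n - 2) < sin x ^ n / x ^ (n - 2) :=
      div_lt_div_of_pos_left hs (by positivity) hlt
    linarith
  · linarith
end

section
/- Let n ≥ 4 be an integer and define p_{i,n}(z) = i(n-i)/(n-1) - (n/2 - i)(z-i)/(n-2) + 2n(z-i)²/((n-1)(n-2)). If 0 < z < min{(n-1)/4, n^(1/(n-3))/(n^(1/(n-3)) - 1)}, then the sum over i from 0 to ⌊z⌋ of (-1)^i · C(n,i) · (z-i)^(n-3) · p_{i,n}(z) is negative. -/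
set_option maxHeartbeats 1000000

open Finset

/-- Upper/nonneg bounds for alternating sums of nonneg decreasing sequences. -/
private lemma alt_ub (M : ℕ) : ∀ c : ℕ → ℝ, (∀ j, j < M → c (j+1) ≤ c j) →
    (∀ j, j ≤ M → 0 ≤ c j) →
    0 ≤ (∑ j ∈ range (M+1), (-1:ℝ)^j * c j) ∧
      (∑ j ∈ range (M+1), (-1:ℝ)^j * c j) ≤ c 0 := by
  induction M with
  | zero =>
    intro c _ hnn
    simp only [zero_add, Finset.sum_range_one, pow_zero, one_mul]
    exact ⟨hnn 0 le_rfl, le_rfl⟩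
  | succ M ih =>
    intro c hmono hnn
    obtain ⟨h1, h2⟩ := ih (fun i => c (i+1)) (fun j hj => hmono (j+1) (by omega))
      (fun j hj => hnn (j+1) (by omega))
    have hs : ∑ j ∈ range (M+1+1), (-1:ℝ)^j * c j
        = -(∑ j ∈ range (M+1), (-1:ℝ)^j * c (j+1)) + c 0 := by
      rw [Finset.sum_range_succ' (fun j => (-1:ℝ)^j * c j) (M+1)]
      rw [← Finset.sum_neg_distrib]
      simp only [pow_zero, one_mul]
      congr 1
      exact Finset.sum_congr rfl (fun i _ => by ring)
    rw [hs]
    have hc10 : c 1 ≤ c 0 := hmono 0 (by omega)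
    constructor
    · linarith
    · linarith

private lemma alt_lb (M : ℕ) (c : ℕ → ℝ) (hmono : ∀ j, j < M+1 → c (j+1) ≤ c j)
    (hnn : ∀ j, j ≤ M+1 → 0 ≤ c j) :
    c 0 - c 1 ≤ ∑ j ∈ range (M+1+1), (-1:ℝ)^j * c j := by
  obtain ⟨h1, h2⟩ := alt_ub M (fun i => c (i+1)) (fun j hj => hmono (j+1) (by omega))
    (fun j hj => hnn (j+1) (by omega))
  have hs : ∑ j ∈ range (M+1+1), (-1:ℝ)^j * c j
      = -(∑ j ∈ range (M+1), (-1:ℝ)^j * c (j+1)) + c 0 := by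
    rw [Finset.sum_range_succ' (fun j => (-1:ℝ)^j * c j) (M+1)]
    rw [← Finset.sum_neg_distrib]
    simp only [pow_zero, one_mul]
    congr 1
    exact Finset.sum_congr rfl (fun i _ => by ring)
  rw [hs]
  linarith

private lemma choose_shift (m k : ℕ) : (m+1).choose k * ((m+1) - k) = (m+1) * m.choose k := by
  rw [← Nat.choose_succ_right_eq, Nat.add_one_mul_choose_eq]

private lemma cast_ca (N k : ℕ) (hk : k ≤ N) :
    ((N+4).choose (k+2) : ℝ) * (((N:ℝ)+2) - k) * (((N:ℝ)+1) - k)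
      = ((N:ℝ)+4) * ((N:ℝ)+3) * ((N+2).choose (k+2)) := by
  have h1 : (N+4).choose (k+2) * ((N+4) - (k+2)) = (N+4) * ((N+3).choose (k+2)) :=
    choose_shift (N+3) (k+2)
  have h2 : (N+3).choose (k+2) * ((N+3) - (k+2)) = (N+3) * ((N+2).choose (k+2)) :=
    choose_shift (N+2) (k+2)
  have e1 : (N+4) - (k+2) = N+2-k := by omega
  have e2 : (N+3) - (k+2) = N+1-k := by omega
  rw [e1] at h1; rw [e2] at h2
  have hnat : (N+4).choose (k+2) * ((N+2-k) * (N+1-k))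
      = (N+4) * ((N+3) * ((N+2).choose (k+2))) := by
    rw [← Nat.mul_assoc, h1, Nat.mul_assoc, h2]
  have c1 : ((N+2-k : ℕ) : ℝ) = ((N:ℝ)+2) - k := by
    push_cast [Nat.cast_sub (by omega : k ≤ N+2)]; ring
  have c2 : ((N+1-k : ℕ) : ℝ) = ((N:ℝ)+1) - k := by
    push_cast [Nat.cast_sub (by omega : k ≤ N+1)]; ring
  have := congrArg (fun t : ℕ => (t : ℝ)) hnat
  push_cast [Nat.cast_sub (by omega : k ≤ N+2), Nat.cast_sub (by omega : k ≤ N+1)] at this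
  push_cast
  linarith [this]

private lemma cast_cb (N k : ℕ) (hk : k ≤ N) :
    ((N+4).choose (k+2) : ℝ) * (((k:ℝ)+2) * (((N:ℝ)+2) - k))
      = ((N:ℝ)+4) * ((N:ℝ)+3) * ((N+2).choose (k+1)) := by
  have h1 : (N+4) * ((N+3).choose (k+1)) = (N+4).choose (k+2) * (k+2) :=
    Nat.add_one_mul_choose_eq (N+3) (k+1)
  have h2 : (N+3).choose (k+1) * ((N+3) - (k+1)) = (N+3) * ((N+2).choose (k+1)) :=
    choose_shift (N+2) (k+1)
  have e2 : (N+3) - (k+1) = N+2-k := by omega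
  rw [e2] at h2
  have hnat : (N+4).choose (k+2) * ((k+2) * (N+2-k))
      = (N+4) * ((N+3) * ((N+2).choose (k+1))) := by
    rw [← Nat.mul_assoc, ← h1, Nat.mul_assoc, h2]
  have := congrArg (fun t : ℕ => (t : ℝ)) hnat
  push_cast [Nat.cast_sub (by omega : k ≤ N+2)] at this
  push_cast
  linarith [this]

private lemma cast_cc (N k : ℕ) :
    ((N+4).choose (k+2) : ℝ) * (((k:ℝ)+2) * ((k:ℝ)+1))
      = ((N:ℝ)+4) * ((N:ℝ)+3) * ((N+2).choose k) := by
  have h1 : (N+4) * ((N+3).choose (k+1)) = (N+4).choose (k+2) * (k+2) :=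
    Nat.add_one_mul_choose_eq (N+3) (k+1)
  have h2 : (N+3) * ((N+2).choose k) = (N+3).choose (k+1) * (k+1) :=
    Nat.add_one_mul_choose_eq (N+2) k
  have hnat : (N+4).choose (k+2) * ((k+2) * (k+1))
      = (N+4) * ((N+3) * ((N+2).choose k)) := by
    rw [← Nat.mul_assoc, ← h1, Nat.mul_assoc, ← h2]
    try ring
  have := congrArg (fun t : ℕ => (t : ℝ)) hnat
  push_cast at this
  push_cast
  linarith [this]

private lemma choose_succ_le (N j : ℕ) :
    ((N+2).choose (j+1) : ℝ) ≤ ((N:ℝ)+2) * ((N+2).choose j) := by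
  have h : (N+2).choose (j+1) * (j+1) = (N+2).choose j * ((N+2) - j) :=
    Nat.choose_succ_right_eq (N+2) j
  have h2 : (N+2).choose (j+1) ≤ (N+2).choose (j+1) * (j+1) :=
    Nat.le_mul_of_pos_right _ (by omega)
  have h3 : (N+2).choose j * ((N+2) - j) ≤ (N+2).choose j * (N+2) :=
    Nat.mul_le_mul_left _ (by omega)
  have : (N+2).choose (j+1) ≤ (N+2) * ((N+2).choose j) := by
    calc (N+2).choose (j+1) ≤ (N+2).choose (j+1) * (j+1) := h2
    _ = (N+2).choose j * ((N+2) - j) := h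
    _ ≤ (N+2).choose j * (N+2) := h3
    _ = (N+2) * ((N+2).choose j) := Nat.mul_comm _ _
  exact_mod_cast this

/-- key monotonicity step for the decreasing alternating terms -/
private lemma mono_step (N j : ℕ) (z w : ℝ) (h1 : 1 ≤ w) (hwz : w ≤ z)
    (hXY : ((N:ℝ)+4) * (z-1)^(N+1) ≤ z^(N+1)) :
    ((N+2).choose (j+1) : ℝ) * (w-1)^(N+1) ≤ ((N+2).choose j : ℝ) * w^(N+1) := by
  have hz1 : (1:ℝ) ≤ z := le_trans h1 hwz
  have hz0 : (0:ℝ) < z := by linarith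
  have hX : (0:ℝ) < z^(N+1) := pow_pos hz0 _
  have hkey : ((w-1)*z)^(N+1) ≤ (w*(z-1))^(N+1) := by
    apply pow_le_pow_left₀ (by nlinarith) (by nlinarith)
  rw [mul_pow, mul_pow] at hkey
  have hC := choose_succ_le N j
  have hCnn : (0:ℝ) ≤ ((N+2).choose j : ℝ) := by positivity
  have hwn : (0:ℝ) ≤ (w-1)^(N+1) := pow_nonneg (by linarith) _
  have hwpn : (0:ℝ) ≤ w^(N+1) := pow_nonneg (by linarith) _
  have hYnn : (0:ℝ) ≤ (z-1)^(N+1) := pow_nonneg (by linarith) _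
  -- multiply goal by z^(N+1) > 0
  have step1 : ((N+2).choose (j+1) : ℝ) * (w-1)^(N+1) * z^(N+1)
      ≤ (((N:ℝ)+2) * ((N+2).choose j)) * (w-1)^(N+1) * z^(N+1) := by
    apply mul_le_mul_of_nonneg_right _ hX.le
    exact mul_le_mul_of_nonneg_right hC hwn
  have step2 : (((N:ℝ)+2) * ((N+2).choose j)) * (w-1)^(N+1) * z^(N+1)
      ≤ (((N:ℝ)+2) * ((N+2).choose j)) * (w^(N+1) * (z-1)^(N+1)) := by
    rw [mul_assoc]
    apply mul_le_mul_of_nonneg_left hkey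
    positivity
  have step3 : (((N:ℝ)+2) * ((N+2).choose j)) * (w^(N+1) * (z-1)^(N+1))
      ≤ ((N+2).choose j : ℝ) * w^(N+1) * z^(N+1) := by
    have h24 : ((N:ℝ)+2) * (z-1)^(N+1) ≤ z^(N+1) := by nlinarith
    calc (((N:ℝ)+2) * ((N+2).choose j)) * (w^(N+1) * (z-1)^(N+1))
        = (((N+2).choose j : ℝ) * w^(N+1)) * (((N:ℝ)+2) * (z-1)^(N+1)) := by ring
      _ ≤ (((N+2).choose j : ℝ) * w^(N+1)) * z^(N+1) := by
          apply mul_le_mul_of_nonneg_left h24; positivity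
  have := le_trans (le_trans step1 step2) step3
  exact le_of_mul_le_mul_right this hX

/-- final analytic inequality -/
private lemma final_neg (N : ℕ) (z X Y Z2 U V W : ℝ) (hN2 : 2 ≤ N) (hz0 : 0 < z)
    (hz1 : 1 ≤ z) (hz4 : 4*z < (N:ℝ)+3) (hX : 0 < X) (hY : 0 ≤ Y) (hZ2 : 0 ≤ Z2)
    (hXY : ((N:ℝ)+4)*Y < X) (hZY : Z2 * X ≤ Y * Y)
    (hU : X - ((N:ℝ)+2)*Y ≤ U) (hV : Y - ((N:ℝ)+2)*Z2 ≤ V) (hW : W ≤ Z2) :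
    (((N:ℝ)+4)*z*(4*z-((N:ℝ)+3))) * U
      - (((N:ℝ)+4)*(8*z^2-8*((N:ℝ)+4)*z+3*((N:ℝ)+4)^2-5*((N:ℝ)+4)+6)) * V
      + (((N:ℝ)+4)*(((N:ℝ)+4)-z)*(3*((N:ℝ)+4)+1-4*z)) * W < 0 := by
  have hN2' : (2:ℝ) ≤ (N:ℝ) := by exact_mod_cast hN2
  obtain ⟨A', hA'⟩ : ∃ a : ℝ, a = ((N:ℝ)+4)*z*(4*z-((N:ℝ)+3)) := ⟨_, rfl⟩
  obtain ⟨B', hB'⟩ : ∃ a : ℝ,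
      a = ((N:ℝ)+4)*(8*z^2-8*((N:ℝ)+4)*z+3*((N:ℝ)+4)^2-5*((N:ℝ)+4)+6) := ⟨_, rfl⟩
  obtain ⟨C', hC'⟩ : ∃ a : ℝ, a = ((N:ℝ)+4)*(((N:ℝ)+4)-z)*(3*((N:ℝ)+4)+1-4*z) := ⟨_, rfl⟩
  rw [← hA', ← hB', ← hC']
  have hA : A' < 0 := by
    rw [hA']
    apply mul_neg_of_pos_of_neg
    · positivity
    · linarith
  have hB : 0 < B' := by
    rw [hB']
    have hprod : (0:ℝ) ≤ ((N:ℝ)+3-4*z)*(3*((N:ℝ)+4)+1-4*z) :=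
      mul_nonneg (by linarith) (by linarith)
    have h13 : (0:ℝ) < 3*((N:ℝ)+4)^2 - 8*((N:ℝ)+4)+13 := by nlinarith
    apply mul_pos (by positivity)
    nlinarith
  have hC : 0 < C' := by
    rw [hC']
    apply mul_pos (mul_pos (by positivity) (by linarith)) (by linarith)
  obtain ⟨E, hE'⟩ : ∃ a : ℝ, a = (8*((N:ℝ)+4)-12)*z^2
      + (-2*((N:ℝ)+4)^2+11*((N:ℝ)+4)-1)*z - (3*((N:ℝ)+4)^2-11*((N:ℝ)+4)+12) := ⟨_, rfl⟩
  have hE : E ≤ 0 := by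
    have t1 : (0:ℝ) ≤ z - 1 := by linarith
    have t2 : (0:ℝ) ≤ (N:ℝ)+3-4*z := by linarith
    have t3 : (0:ℝ) < (N:ℝ)-1 := by linarith
    have q1 : (0:ℝ) ≤ 20*((N:ℝ)+3-4*z)*((N:ℝ)+3)*((N:ℝ)-1) := by positivity
    have q2 : (0:ℝ) ≤ 8*(z-1)*(3*(N:ℝ)+7)*((N:ℝ)-1) := by positivity
    have q3 : (0:ℝ) ≤ (8*(N:ℝ)+20)*((N:ℝ)-1)*(z-1)*((N:ℝ)+3-4*z) := by positivity
    have key : 4*((N:ℝ)-1)*E = -(20*((N:ℝ)+3-4*z)*((N:ℝ)+3)*((N:ℝ)-1))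
        - (8*(z-1)*(3*(N:ℝ)+7)*((N:ℝ)-1))
        - ((8*(N:ℝ)+20)*((N:ℝ)-1)*(z-1)*((N:ℝ)+3-4*z)) := by
      rw [hE']; ring
    by_contra hcon
    push_neg at hcon
    nlinarith [mul_pos t3 hcon, key]
  have s1 : A' * U ≤ A' * (X - ((N:ℝ)+2)*Y) := mul_le_mul_of_nonpos_left hU hA.le
  have s2 : B' * (Y - ((N:ℝ)+2)*Z2) ≤ B' * V := mul_le_mul_of_nonneg_left hV hB.le
  have s3 : C' * W ≤ C' * Z2 := mul_le_mul_of_nonneg_left hW hC.le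
  obtain ⟨Q, hQ'⟩ : ∃ a : ℝ,
      a = A' * (X - ((N:ℝ)+2)*Y) - B' * (Y - ((N:ℝ)+2)*Z2) + C' * Z2 := ⟨_, rfl⟩
  have hmain : A' * U - B' * V + C' * W ≤ Q := by rw [hQ']; linarith
  obtain ⟨K1, hK1⟩ : ∃ a : ℝ, a = -(((N:ℝ)+2)*A') - B' := ⟨_, rfl⟩
  obtain ⟨K2, hK2⟩ : ∃ a : ℝ, a = ((N:ℝ)+2)*B' + C' := ⟨_, rfl⟩
  have hK2pos : 0 < K2 := by rw [hK2]; nlinarith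
  have e0 : ((N:ℝ)+4)*(Q*X) = ((N:ℝ)+4)*A'*(X*X) + ((N:ℝ)+4)*K1*(X*Y)
      + ((N:ℝ)+4)*K2*(Z2*X) := by rw [hQ', hK1, hK2]; ring
  have e1 : ((N:ℝ)+4)*K2*(Z2*X) ≤ ((N:ℝ)+4)*K2*(Y*Y) := by
    apply mul_le_mul_of_nonneg_left hZY
    positivity
  have e2 : ((N:ℝ)+4)*K2*(Y*Y) ≤ K2*(X*Y) := by
    have h := mul_le_mul_of_nonneg_right hXY.le hY
    nlinarith [hK2pos]
  have eE : (((N:ℝ)+4)^2*A' + ((N:ℝ)+4)*K1 + K2) = ((N:ℝ)+4)*E := by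
    rw [hK1, hK2, hA', hB', hC', hE']; ring
  have e3 : ((N:ℝ)+4)*A'*(X*X) + ((N:ℝ)+4)*K1*(X*Y) + K2*(X*Y)
      = ((N:ℝ)+4)*A'*X*(X-((N:ℝ)+4)*Y) + (((N:ℝ)+4)^2*A' + ((N:ℝ)+4)*K1 + K2)*(X*Y) := by
    ring
  have e4 : (((N:ℝ)+4)*E)*(X*Y) ≤ 0 := by
    apply mul_nonpos_of_nonpos_of_nonneg
    · nlinarith
    · positivity
  have hpos2 : (0:ℝ) < ((N:ℝ)+4)*X*(X-((N:ℝ)+4)*Y) := by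
    apply mul_pos (by positivity)
    linarith
  have e5 : ((N:ℝ)+4)*A'*X*(X-((N:ℝ)+4)*Y) < 0 := by
    nlinarith [mul_neg_of_neg_of_pos hA hpos2]
  have e6 : ((N:ℝ)+4)*(Q*X) < 0 := by
    rw [e0]
    calc ((N:ℝ)+4)*A'*(X*X) + ((N:ℝ)+4)*K1*(X*Y) + ((N:ℝ)+4)*K2*(Z2*X)
        ≤ ((N:ℝ)+4)*A'*(X*X) + ((N:ℝ)+4)*K1*(X*Y) + K2*(X*Y) := by linarith
      _ = ((N:ℝ)+4)*A'*X*(X-((N:ℝ)+4)*Y)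
          + (((N:ℝ)+4)^2*A' + ((N:ℝ)+4)*K1 + K2)*(X*Y) := e3
      _ = ((N:ℝ)+4)*A'*X*(X-((N:ℝ)+4)*Y) + (((N:ℝ)+4)*E)*(X*Y) := by rw [eE]
      _ < 0 := by linarith
  have hQX : Q*X < 0 := by nlinarith [e6, show (0:ℝ) < (N:ℝ)+4 by positivity]
  have hQneg : Q < 0 := by
    by_contra hcon
    push_neg at hcon
    nlinarith [mul_nonneg hcon hX.le]
  linarith

private lemma sum_identity (N m : ℕ) (z : ℝ) (hmN : m ≤ N+1) :
    (2*((N:ℝ)+3)*((N:ℝ)+2)) * ∑ i ∈ range (m+1), ((-1:ℝ)^i * ((N+4).choose i : ℝ) * (z - i)^(N+1) *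
        ((i:ℝ) * (((N+4:ℕ):ℝ) - i) / (((N+4:ℕ):ℝ) - 1) - (((N+4:ℕ):ℝ)/2 - i) * (z - i) / (((N+4:ℕ):ℝ) - 2) +
          2 * ((N+4:ℕ):ℝ) * (z - i)^2 / ((((N+4:ℕ):ℝ) - 1) * (((N+4:ℕ):ℝ) - 2))))
      = (((N:ℝ)+4)*z*(4*z-((N:ℝ)+3))) *
          (∑ j ∈ range (m+1), (-1:ℝ)^j * (((N+2).choose j : ℝ) * (z - j)^(N+1)))
      - (((N:ℝ)+4)*(8*z^2-8*((N:ℝ)+4)*z+3*((N:ℝ)+4)^2-5*((N:ℝ)+4)+6)) *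
          (∑ j ∈ range m, (-1:ℝ)^j * (((N+2).choose j : ℝ) * (z - 1 - j)^(N+1)))
      + (((N:ℝ)+4)*(((N:ℝ)+4)-z)*(3*((N:ℝ)+4)+1-4*z)) *
          (∑ j ∈ range (m-1), (-1:ℝ)^j * (((N+2).choose j : ℝ) * (z - 2 - j)^(N+1))) := by
  have h3 : ((N:ℝ)+3) ≠ 0 := by positivity
  have h2 : ((N:ℝ)+2) ≠ 0 := by positivity
  obtain ⟨bp, hbp0, hbpS⟩ : ∃ f : ℕ → ℝ, f 0 = 0 ∧ ∀ i, f (i+1) =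
      -((((N:ℝ)+4)*(8*z^2-8*((N:ℝ)+4)*z+3*((N:ℝ)+4)^2-5*((N:ℝ)+4)+6)) *
        ((-1:ℝ)^i * (((N+2).choose i : ℝ) * (z - 1 - i)^(N+1)))) :=
    ⟨fun j => match j with
      | 0 => 0
      | (i+1) => -((((N:ℝ)+4)*(8*z^2-8*((N:ℝ)+4)*z+3*((N:ℝ)+4)^2-5*((N:ℝ)+4)+6)) *
          ((-1:ℝ)^i * (((N+2).choose i : ℝ) * (z - 1 - i)^(N+1)))),
      rfl, fun i => rfl⟩
  obtain ⟨cp, hcp0, hcp1, hcpS⟩ : ∃ f : ℕ → ℝ, f 0 = 0 ∧ f 1 = 0 ∧ ∀ k, f (k+2) =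
      (((N:ℝ)+4)*(((N:ℝ)+4)-z)*(3*((N:ℝ)+4)+1-4*z)) *
        ((-1:ℝ)^k * (((N+2).choose k : ℝ) * (z - 2 - k)^(N+1))) :=
    ⟨fun j => match j with
      | 0 => 0
      | 1 => 0
      | (k+2) => (((N:ℝ)+4)*(((N:ℝ)+4)-z)*(3*((N:ℝ)+4)+1-4*z)) *
          ((-1:ℝ)^k * (((N+2).choose k : ℝ) * (z - 2 - k)^(N+1))),
      rfl, rfl, fun k => rfl⟩
  have hterm : ∀ j ∈ range (m+1),
      (2*((N:ℝ)+3)*((N:ℝ)+2)) * ((-1:ℝ)^j * ((N+4).choose j : ℝ) * (z - j)^(N+1) *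
        ((j:ℝ) * (((N+4:ℕ):ℝ) - j) / (((N+4:ℕ):ℝ) - 1) - (((N+4:ℕ):ℝ)/2 - j) * (z - j) / (((N+4:ℕ):ℝ) - 2) +
          2 * ((N+4:ℕ):ℝ) * (z - j)^2 / ((((N+4:ℕ):ℝ) - 1) * (((N+4:ℕ):ℝ) - 2))))
      = (((N:ℝ)+4)*z*(4*z-((N:ℝ)+3))) * ((-1:ℝ)^j * (((N+2).choose j : ℝ) * (z - j)^(N+1)))
        + bp j + cp j := by
    intro j hj
    have hjm : j ≤ m := by
      have := Finset.mem_range.mp hj; omega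
    match j with
    | 0 =>
      rw [hbp0, hcp0]
      simp only [pow_zero, Nat.choose_zero_right, Nat.cast_zero, Nat.cast_one, one_mul,
        sub_zero, add_zero, zero_mul, zero_div]
      have e0 : ((N+4:ℕ):ℝ) = (N:ℝ)+4 := by push_cast; ring
      rw [e0, show ((N:ℝ)+4) - 1 = (N:ℝ)+3 by ring, show ((N:ℝ)+4) - 2 = (N:ℝ)+2 by ring]
      field_simp
      ring
    | 1 =>
      rw [hbpS 0, hcp1]
      simp only [Nat.choose_one_right, Nat.choose_zero_right, Nat.cast_one, Nat.cast_zero,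
        pow_one, pow_zero, one_mul, sub_zero, add_zero]
      have e0 : ((N+4:ℕ):ℝ) = (N:ℝ)+4 := by push_cast; ring
      rw [e0, show ((N:ℝ)+4) - 1 = (N:ℝ)+3 by ring, show ((N:ℝ)+4) - 2 = (N:ℝ)+2 by ring]
      field_simp
      push_cast
      ring
    | (k+2) =>
      rw [hbpS (k+1), hcpS k]
      have hk : k ≤ N := by omega
      have hca := cast_ca N k hk
      have hcb := cast_cb N k hk
      have hcc := cast_cc N k
      have hne : (((N:ℝ)+4)*((N:ℝ)+3)) ≠ 0 := by positivity
      have FM : (((N:ℝ)+4)*((N:ℝ)+3)) * ((2*((N:ℝ)+3)*((N:ℝ)+2)) *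
          (((k:ℝ)+2) * (((N:ℝ)+4) - ((k:ℝ)+2)) / (((N:ℝ)+4) - 1)
            - ((((N:ℝ)+4))/2 - ((k:ℝ)+2)) * (z - ((k:ℝ)+2)) / (((N:ℝ)+4) - 2)
            + 2 * (((N:ℝ)+4)) * (z - ((k:ℝ)+2))^2 / (((((N:ℝ)+4)) - 1) * ((((N:ℝ)+4)) - 2))))
          = (((N:ℝ)+4)*z*(4*z-((N:ℝ)+3))) * ((((N:ℝ)+2) - k) * (((N:ℝ)+1) - k))
          + (((N:ℝ)+4)*(8*z^2-8*((N:ℝ)+4)*z+3*((N:ℝ)+4)^2-5*((N:ℝ)+4)+6)) * (((k:ℝ)+2) * (((N:ℝ)+2) - k))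
          + (((N:ℝ)+4)*(((N:ℝ)+4)-z)*(3*((N:ℝ)+4)+1-4*z)) * (((k:ℝ)+2) * ((k:ℝ)+1)) := by
        have e1 : ((N:ℝ)+4) - 1 = (N:ℝ)+3 := by ring
        have e2 : ((N:ℝ)+4) - 2 = (N:ℝ)+2 := by ring
        rw [e1, e2]
        field_simp
        ring
      apply mul_left_cancel₀ hne
      push_cast
      linear_combination ((-1:ℝ)^k * (z-(k:ℝ)-2)^(N+1) * (((N+4).choose (k+2) : ℕ):ℝ)) * FM
        + ((-1:ℝ)^k * (z-(k:ℝ)-2)^(N+1) * (((N:ℝ)+4)*z*(4*z-((N:ℝ)+3)))) * hca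
        + ((-1:ℝ)^k * (z-(k:ℝ)-2)^(N+1) *
            (((N:ℝ)+4)*(8*z^2-8*((N:ℝ)+4)*z+3*((N:ℝ)+4)^2-5*((N:ℝ)+4)+6))) * hcb
        + ((-1:ℝ)^k * (z-(k:ℝ)-2)^(N+1) *
            (((N:ℝ)+4)*(((N:ℝ)+4)-z)*(3*((N:ℝ)+4)+1-4*z))) * hcc
  have hbpsum : ∑ j ∈ range (m+1), bp j
      = -((((N:ℝ)+4)*(8*z^2-8*((N:ℝ)+4)*z+3*((N:ℝ)+4)^2-5*((N:ℝ)+4)+6)) *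
          ∑ j ∈ range m, (-1:ℝ)^j * (((N+2).choose j : ℝ) * (z - 1 - j)^(N+1))) := by
    calc ∑ j ∈ range (m+1), bp j = (∑ i ∈ range m, bp (i+1)) + bp 0 :=
          Finset.sum_range_succ' bp m
      _ = ∑ i ∈ range m, -((((N:ℝ)+4)*(8*z^2-8*((N:ℝ)+4)*z+3*((N:ℝ)+4)^2-5*((N:ℝ)+4)+6)) *
            ((-1:ℝ)^i * (((N+2).choose i : ℝ) * (z - 1 - i)^(N+1)))) := by
          rw [hbp0, add_zero]
          exact Finset.sum_congr rfl (fun i _ => hbpS i)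
      _ = -((((N:ℝ)+4)*(8*z^2-8*((N:ℝ)+4)*z+3*((N:ℝ)+4)^2-5*((N:ℝ)+4)+6)) *
            ∑ j ∈ range m, (-1:ℝ)^j * (((N+2).choose j : ℝ) * (z - 1 - j)^(N+1))) := by
          rw [Finset.sum_neg_distrib, ← Finset.mul_sum]
  have hcpsum : ∑ j ∈ range (m+1), cp j
      = (((N:ℝ)+4)*(((N:ℝ)+4)-z)*(3*((N:ℝ)+4)+1-4*z)) *
          ∑ j ∈ range (m-1), (-1:ℝ)^j * (((N+2).choose j : ℝ) * (z - 2 - j)^(N+1)) := by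
    rcases Nat.eq_zero_or_pos m with rfl | hm1
    · simp [hcp0]
    · obtain ⟨m₁, rfl⟩ : ∃ m₁, m = m₁+1 := ⟨m-1, by omega⟩
      rw [Nat.add_sub_cancel]
      calc ∑ j ∈ range (m₁+1+1), cp j = (∑ i ∈ range (m₁+1), cp (i+1)) + cp 0 :=
            Finset.sum_range_succ' cp (m₁+1)
        _ = ∑ i ∈ range (m₁+1), cp (i+1) := by rw [hcp0, add_zero]
        _ = (∑ k ∈ range m₁, cp (k+1+1)) + cp (0+1) :=
            Finset.sum_range_succ' (fun i => cp (i+1)) m₁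
        _ = ∑ k ∈ range m₁, (((N:ℝ)+4)*(((N:ℝ)+4)-z)*(3*((N:ℝ)+4)+1-4*z)) *
              ((-1:ℝ)^k * (((N+2).choose k : ℝ) * (z - 2 - k)^(N+1))) := by
            rw [show (0+1 : ℕ) = 1 by rfl, hcp1, add_zero]
            exact Finset.sum_congr rfl (fun k _ => hcpS k)
        _ = (((N:ℝ)+4)*(((N:ℝ)+4)-z)*(3*((N:ℝ)+4)+1-4*z)) *
              ∑ j ∈ range m₁, (-1:ℝ)^j * (((N+2).choose j : ℝ) * (z - 2 - j)^(N+1)) :=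
            (Finset.mul_sum _ _ _).symm
  calc (2*((N:ℝ)+3)*((N:ℝ)+2)) * ∑ i ∈ range (m+1), ((-1:ℝ)^i * ((N+4).choose i : ℝ) * (z - i)^(N+1) *
        ((i:ℝ) * (((N+4:ℕ):ℝ) - i) / (((N+4:ℕ):ℝ) - 1) - (((N+4:ℕ):ℝ)/2 - i) * (z - i) / (((N+4:ℕ):ℝ) - 2) +
          2 * ((N+4:ℕ):ℝ) * (z - i)^2 / ((((N+4:ℕ):ℝ) - 1) * (((N+4:ℕ):ℝ) - 2))))
      = ∑ i ∈ range (m+1), (2*((N:ℝ)+3)*((N:ℝ)+2)) * ((-1:ℝ)^i * ((N+4).choose i : ℝ) * (z - i)^(N+1) *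
        ((i:ℝ) * (((N+4:ℕ):ℝ) - i) / (((N+4:ℕ):ℝ) - 1) - (((N+4:ℕ):ℝ)/2 - i) * (z - i) / (((N+4:ℕ):ℝ) - 2) +
          2 * ((N+4:ℕ):ℝ) * (z - i)^2 / ((((N+4:ℕ):ℝ) - 1) * (((N+4:ℕ):ℝ) - 2)))) :=
        Finset.mul_sum _ _ _
    _ = ∑ j ∈ range (m+1), ((((N:ℝ)+4)*z*(4*z-((N:ℝ)+3))) * ((-1:ℝ)^j * (((N+2).choose j : ℝ) * (z - j)^(N+1)))
        + bp j + cp j) := Finset.sum_congr rfl hterm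
    _ = (∑ j ∈ range (m+1), (((N:ℝ)+4)*z*(4*z-((N:ℝ)+3))) * ((-1:ℝ)^j * (((N+2).choose j : ℝ) * (z - j)^(N+1))))
        + (∑ j ∈ range (m+1), bp j) + (∑ j ∈ range (m+1), cp j) := by
        rw [Finset.sum_add_distrib, Finset.sum_add_distrib]
    _ = (((N:ℝ)+4)*z*(4*z-((N:ℝ)+3))) *
          (∑ j ∈ range (m+1), (-1:ℝ)^j * (((N+2).choose j : ℝ) * (z - j)^(N+1)))
      - (((N:ℝ)+4)*(8*z^2-8*((N:ℝ)+4)*z+3*((N:ℝ)+4)^2-5*((N:ℝ)+4)+6)) *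
          (∑ j ∈ range m, (-1:ℝ)^j * (((N+2).choose j : ℝ) * (z - 1 - j)^(N+1)))
      + (((N:ℝ)+4)*(((N:ℝ)+4)-z)*(3*((N:ℝ)+4)+1-4*z)) *
          (∑ j ∈ range (m-1), (-1:ℝ)^j * (((N+2).choose j : ℝ) * (z - 2 - j)^(N+1))) := by
        rw [hbpsum, hcpsum, ← Finset.mul_sum]
        ring

open Finset in
theorem stmt_9 (n : ℕ) (hn : 4 ≤ n) (z : ℝ)
    (hz : 0 < z)
    (hz' : z < min ((n - 1 : ℝ) / 4)
      ((n : ℝ) ^ ((1 : ℝ) / (n - 3)) / ((n : ℝ) ^ ((1 : ℝ) / (n - 3)) - 1))) :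
    ∑ i ∈ range (⌊z⌋₊ + 1), (-1 : ℝ) ^ i * n.choose i * (z - i) ^ (n - 3) *
      ((i : ℝ) * (n - i) / (n - 1) - ((n : ℝ) / 2 - i) * (z - i) / (n - 2) +
        2 * n * (z - i) ^ 2 / ((n - 1) * (n - 2))) < 0 := by
  obtain ⟨N, rfl⟩ : ∃ N, n = N + 4 := ⟨n - 4, by omega⟩
  rw [show N + 4 - 3 = N + 1 by omega]
  obtain ⟨m, hm⟩ : ∃ m, ⌊z⌋₊ = m := ⟨_, rfl⟩
  rw [hm]
  have hN0 : (0:ℝ) ≤ (N:ℝ) := Nat.cast_nonneg N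
  have hz1' : 4*z < (N:ℝ)+3 := by
    have h := lt_of_lt_of_le hz' (min_le_left _ _)
    push_cast at h
    linarith
  have hmz : (m:ℝ) ≤ z := by rw [← hm]; exact Nat.floor_le hz.le
  have hmN : m ≤ N + 1 := by
    have h1 : (m:ℝ) < (N:ℝ)+2 := by linarith
    have h2 : m < N+2 := by exact_mod_cast h1
    omega
  have hid := sum_identity N m z hmN
  have hD : (0:ℝ) < 2*((N:ℝ)+3)*((N:ℝ)+2) := by positivity
  rcases Nat.eq_zero_or_pos m with rfl | hm1
  · -- m = 0 case
    simp only [zero_add, Finset.sum_range_one, Nat.zero_sub, Finset.range_zero,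
      Finset.sum_empty, mul_zero, sub_zero, add_zero, pow_zero, Nat.choose_zero_right,
      Nat.cast_one, Nat.cast_zero, one_mul, zero_mul, zero_div, zero_sub] at hid ⊢
    have hA : (((N:ℝ)+4)*z*(4*z-((N:ℝ)+3))) < 0 :=
      mul_neg_of_pos_of_neg (by positivity) (by linarith)
    have hXp : (0:ℝ) < z^(N+1) := pow_pos hz _
    have hneg : (((N:ℝ)+4)*z*(4*z-((N:ℝ)+3))) * (z^(N+1)) < 0 :=
      mul_neg_of_neg_of_pos hA hXp
    nlinarith [hid, hneg, hD]
  · -- m ≥ 1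
    obtain ⟨m₁, rfl⟩ : ∃ m₁, m = m₁ + 1 := ⟨m-1, by omega⟩
    have hz1 : (1:ℝ) ≤ z := by
      have h1 : ((m₁:ℝ)+1) ≤ z := by push_cast at hmz ⊢; linarith
      linarith [Nat.cast_nonneg (α := ℝ) m₁]
    have hN2 : 2 ≤ N := by
      have h1 : (1:ℝ) < (N:ℝ) := by linarith
      have h2 : 1 < N := by exact_mod_cast h1
      omega
    -- hXY from the second bound
    have hXY : ((N:ℝ)+4) * (z-1)^(N+1) < z^(N+1) := by
      have hb2 := lt_of_lt_of_le hz' (min_le_right _ _)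
      rw [show (((N+4:ℕ)):ℝ) = (N:ℝ)+4 by push_cast; ring] at hb2
      rw [show ((N:ℝ)+4) - 3 = (N:ℝ)+1 by ring] at hb2
      have hrpos : (0:ℝ) < ((N:ℝ)+4) := by positivity
      have hr1 : 1 < ((N:ℝ)+4) ^ ((1:ℝ)/((N:ℝ)+1)) := by
        rw [Real.one_lt_rpow_iff_of_pos hrpos]
        exact Or.inl ⟨by linarith, by positivity⟩
      set r := ((N:ℝ)+4) ^ ((1:ℝ)/((N:ℝ)+1)) with hr
      have hzr : r * (z-1) < z := by
        have h := (lt_div_iff₀ (by linarith : (0:ℝ) < r - 1)).mp hb2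
        nlinarith
      have hrn : r^(N+1) = (N:ℝ)+4 := by
        rw [hr, ← Real.rpow_natCast (((N:ℝ)+4) ^ ((1:ℝ)/((N:ℝ)+1))) (N+1),
          ← Real.rpow_mul hrpos.le]
        rw [show (1:ℝ)/((N:ℝ)+1) * ((N+1:ℕ):ℝ) = 1 by
          push_cast
          field_simp]
        exact Real.rpow_one _
      calc ((N:ℝ)+4) * (z-1)^(N+1) = (r*(z-1))^(N+1) := by rw [mul_pow, hrn]
        _ < z^(N+1) := pow_lt_pow_left₀ hzr
            (mul_nonneg (by linarith) (by linarith)) (by omega)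
    have hX : (0:ℝ) < z^(N+1) := pow_pos hz _
    have hY : (0:ℝ) ≤ (z-1)^(N+1) := pow_nonneg (by linarith) _
    -- U lower bound
    have monoU : ∀ j, j < m₁+1 →
        (((N+2).choose (j+1) : ℝ)) * (z - (↑(j+1):ℝ))^(N+1) ≤
          (((N+2).choose j : ℝ)) * (z - (j:ℝ))^(N+1) := by
      intro j hj
      have hjz : ((j:ℝ)+1) ≤ z := by
        have : ((j:ℝ)+1) ≤ ((m₁:ℝ)+1) := by
          have : j + 1 ≤ m₁ + 1 := by omega
          exact_mod_cast this
        have hmz' : ((m₁:ℝ)+1) ≤ z := by push_cast at hmz; linarith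
        linarith
      have h1w : (1:ℝ) ≤ z - j := by linarith
      have h2w : z - (j:ℝ) ≤ z := by linarith [Nat.cast_nonneg (α := ℝ) j]
      have hst := mono_step N j z (z - j) h1w h2w hXY.le
      have hrw : (z - (j:ℝ)) - 1 = z - (↑(j+1):ℝ) := by push_cast; ring
      rwa [hrw] at hst
    have nnU : ∀ j, j ≤ m₁+1 → (0:ℝ) ≤ (((N+2).choose j : ℝ)) * (z - (j:ℝ))^(N+1) := by
      intro j hj
      have hjz : (j:ℝ) ≤ z := by
        have : (j:ℝ) ≤ ((m₁:ℝ)+1) := by exact_mod_cast hj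
        have hmz' : ((m₁:ℝ)+1) ≤ z := by push_cast at hmz; linarith
        linarith
      exact mul_nonneg (by positivity) (pow_nonneg (by linarith) _)
    have hU := alt_lb m₁ (fun j => (((N+2).choose j : ℝ)) * (z - (j:ℝ))^(N+1)) monoU nnU
    simp only [Nat.choose_zero_right, Nat.choose_one_right, Nat.cast_zero, Nat.cast_one,
      sub_zero, one_mul] at hU
    push_cast at hU
    have hU' : z^(N+1) - ((N:ℝ)+2)*(z-1)^(N+1) ≤
        ∑ j ∈ range (m₁+1+1), (-1:ℝ)^j * (((N+2).choose j : ℝ) * (z - (j:ℝ))^(N+1)) := by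
      linarith [hU]
    rcases Nat.eq_zero_or_pos m₁ with rfl | hm2
    · -- m = 1 case : V is a single term, W empty
      have hVeq : ∑ j ∈ range (0+1), (-1:ℝ)^j * (((N+2).choose j : ℝ) * (z - 1 - (j:ℝ))^(N+1))
          = (z-1)^(N+1) := by
        simp
      have hWeq : ∑ j ∈ range (0+1-1), (-1:ℝ)^j * (((N+2).choose j : ℝ) * (z - 2 - (j:ℝ))^(N+1))
          = 0 := by simp
      have hfn := final_neg N z (z^(N+1)) ((z-1)^(N+1)) 0
        (∑ j ∈ range (0+1+1), (-1:ℝ)^j * (((N+2).choose j : ℝ) * (z - (j:ℝ))^(N+1)))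
        (∑ j ∈ range (0+1), (-1:ℝ)^j * (((N+2).choose j : ℝ) * (z - 1 - (j:ℝ))^(N+1)))
        (∑ j ∈ range (0+1-1), (-1:ℝ)^j * (((N+2).choose j : ℝ) * (z - 2 - (j:ℝ))^(N+1)))
        hN2 hz hz1 hz1' hX hY le_rfl hXY (by nlinarith [hY]) hU'
        (by rw [hVeq]; linarith) (by rw [hWeq])
      by_contra hcon
      push_neg at hcon
      have h2 := mul_nonneg hD.le hcon
      rw [hid] at h2
      linarith [hfn, h2]
    · -- m ≥ 2 case
      obtain ⟨m₂, rfl⟩ : ∃ m₂, m₁ = m₂ + 1 := ⟨m₁-1, by omega⟩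
      have hz2 : (2:ℝ) ≤ z := by
        have hmz' : ((m₂:ℝ)+1+1) ≤ z := by push_cast at hmz; linarith
        linarith [Nat.cast_nonneg (α := ℝ) m₂]
      have hZ2 : (0:ℝ) ≤ (z-2)^(N+1) := pow_nonneg (by linarith) _
      have hZY : (z-2)^(N+1) * z^(N+1) ≤ (z-1)^(N+1) * (z-1)^(N+1) := by
        have h1 : ((z-2)*z)^(N+1) ≤ ((z-1)*(z-1))^(N+1) := by
          apply pow_le_pow_left₀ (by nlinarith) (by nlinarith)
        rw [mul_pow, mul_pow] at h1
        exact h1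
      -- V lower bound
      have monoV : ∀ j, j < m₂+1 →
          (((N+2).choose (j+1) : ℝ)) * (z - 1 - (↑(j+1):ℝ))^(N+1) ≤
            (((N+2).choose j : ℝ)) * (z - 1 - (j:ℝ))^(N+1) := by
        intro j hj
        have hjz : ((j:ℝ)+2) ≤ z := by
          have h1 : j + 2 ≤ m₂ + 2 := by omega
          have h2 : ((j:ℝ)+2) ≤ ((m₂:ℝ)+2) := by exact_mod_cast h1
          have hmz' : ((m₂:ℝ)+2) ≤ z := by push_cast at hmz; linarith
          linarith
        have h1w : (1:ℝ) ≤ z - 1 - j := by linarith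
        have h2w : z - 1 - (j:ℝ) ≤ z := by linarith [Nat.cast_nonneg (α := ℝ) j]
        have hst := mono_step N j z (z - 1 - j) h1w h2w hXY.le
        have hrw : (z - 1 - (j:ℝ)) - 1 = z - 1 - (↑(j+1):ℝ) := by push_cast; ring
        rwa [hrw] at hst
      have nnV : ∀ j, j ≤ m₂+1 → (0:ℝ) ≤ (((N+2).choose j : ℝ)) * (z - 1 - (j:ℝ))^(N+1) := by
        intro j hj
        have hjz : ((j:ℝ)+1) ≤ z := by
          have h2 : ((j:ℝ)) ≤ ((m₂:ℝ)+1) := by exact_mod_cast hj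
          have hmz' : ((m₂:ℝ)+2) ≤ z := by push_cast at hmz; linarith
          linarith
        exact mul_nonneg (by positivity) (pow_nonneg (by linarith) _)
      have hV := alt_lb m₂ (fun j => (((N+2).choose j : ℝ)) * (z - 1 - (j:ℝ))^(N+1)) monoV nnV
      simp only [Nat.choose_zero_right, Nat.choose_one_right, Nat.cast_zero, Nat.cast_one,
        sub_zero, one_mul] at hV
      push_cast at hV
      have hV' : (z-1)^(N+1) - ((N:ℝ)+2)*(z-2)^(N+1) ≤
          ∑ j ∈ range (m₂+1+1), (-1:ℝ)^j * (((N+2).choose j : ℝ) * (z - 1 - (j:ℝ))^(N+1)) := by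
        have e1 : z - 1 - (1:ℝ) = z - 2 := by ring
        rw [e1] at hV
        linarith [hV]
      -- W upper bound
      have monoW : ∀ j, j < m₂ →
          (((N+2).choose (j+1) : ℝ)) * (z - 2 - (↑(j+1):ℝ))^(N+1) ≤
            (((N+2).choose j : ℝ)) * (z - 2 - (j:ℝ))^(N+1) := by
        intro j hj
        have hjz : ((j:ℝ)+3) ≤ z := by
          have h1 : j + 3 ≤ m₂ + 2 := by omega
          have h2 : ((j:ℝ)+3) ≤ ((m₂:ℝ)+2) := by exact_mod_cast h1
          have hmz' : ((m₂:ℝ)+2) ≤ z := by push_cast at hmz; linarith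
          linarith
        have h1w : (1:ℝ) ≤ z - 2 - j := by linarith
        have h2w : z - 2 - (j:ℝ) ≤ z := by linarith [Nat.cast_nonneg (α := ℝ) j]
        have hst := mono_step N j z (z - 2 - j) h1w h2w hXY.le
        have hrw : (z - 2 - (j:ℝ)) - 1 = z - 2 - (↑(j+1):ℝ) := by push_cast; ring
        rwa [hrw] at hst
      have nnW : ∀ j, j ≤ m₂ → (0:ℝ) ≤ (((N+2).choose j : ℝ)) * (z - 2 - (j:ℝ))^(N+1) := by
        intro j hj
        have hjz : ((j:ℝ)+2) ≤ z := by
          have h2 : ((j:ℝ)) ≤ ((m₂:ℝ)) := by exact_mod_cast hj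
          have hmz' : ((m₂:ℝ)+2) ≤ z := by push_cast at hmz; linarith
          linarith
        exact mul_nonneg (by positivity) (pow_nonneg (by linarith) _)
      have hW := (alt_ub m₂ (fun j => (((N+2).choose j : ℝ)) * (z - 2 - (j:ℝ))^(N+1)) monoW nnW).2
      simp only [Nat.choose_zero_right, Nat.cast_zero, Nat.cast_one, sub_zero, one_mul] at hW
      have hW' : ∑ j ∈ range (m₂+1), (-1:ℝ)^j * (((N+2).choose j : ℝ) * (z - 2 - (j:ℝ))^(N+1))
          ≤ (z-2)^(N+1) := hW
      have hrange : m₂ + 1 + 1 - 1 = m₂ + 1 := by omega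
      rw [hrange] at hid
      have hfn := final_neg N z (z^(N+1)) ((z-1)^(N+1)) ((z-2)^(N+1))
        (∑ j ∈ range (m₂+1+1+1), (-1:ℝ)^j * (((N+2).choose j : ℝ) * (z - (j:ℝ))^(N+1)))
        (∑ j ∈ range (m₂+1+1), (-1:ℝ)^j * (((N+2).choose j : ℝ) * (z - 1 - (j:ℝ))^(N+1)))
        (∑ j ∈ range (m₂+1), (-1:ℝ)^j * (((N+2).choose j : ℝ) * (z - 2 - (j:ℝ))^(N+1)))
        hN2 hz hz1 hz1' hX hY hZ2 hXY hZY hU' hV' hW'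
      by_contra hcon
      push_neg at hcon
      have h2 := mul_nonneg hD.le hcon
      rw [hid] at h2
      linarith [hfn, h2]
end

section
/- Let n be an integer with n ≥ 4 and z > 0 a real number. If z < n^(1/(n-3))/(n^(1/(n-3)) - 1), then the sum over i from 0 to ⌊z⌋ of (-1)^i · C(n,i) · (z-i)^(n-3) is positive. -/
open Finset

/-- An alternating sum of a weakly decreasing nonnegative sequence is nonnegative. -/
lemma alt_nonneg (f : ℕ → ℝ) (hmono : ∀ i, f (i + 1) ≤ f i) (hpos : ∀ i, 0 ≤ f i) (k : ℕ) :
    0 ≤ ∑ i ∈ range k, (-1 : ℝ) ^ i * f i := by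
  have heven : ∀ m : ℕ, 0 ≤ ∑ i ∈ range (2 * m), (-1 : ℝ) ^ i * f i := by
    intro m
    induction m with
    | zero => simp
    | succ m ih =>
      have h2m : 2 * (m + 1) = (2 * m) + 1 + 1 := by ring
      rw [h2m, Finset.sum_range_succ, Finset.sum_range_succ]
      have h1 : (-1 : ℝ) ^ (2 * m) = 1 := by
        rw [pow_mul]; norm_num
      have h2 : (-1 : ℝ) ^ (2 * m + 1) = -1 := by
        rw [pow_succ, h1]; ring
      rw [h1, h2]
      have := hmono (2 * m)
      linarith
  rcases Nat.even_or_odd k with ⟨m, hm⟩ | ⟨m, hm⟩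
  · have : k = 2 * m := by omega
    rw [this]; exact heven m
  · rw [hm, Finset.sum_range_succ]
    have h1 : (-1 : ℝ) ^ (2 * m) = 1 := by
      rw [pow_mul]; norm_num
    rw [h1, one_mul]
    have := heven m
    have := hpos (2 * m)
    linarith

open Finset in
theorem stmt_17 (n : ℕ) (hn : 4 ≤ n) (z : ℝ) (hz : 0 < z)
    (hz' : z < (n : ℝ) ^ ((1 : ℝ) / (n - 3)) / ((n : ℝ) ^ ((1 : ℝ) / (n - 3)) - 1)) :
    0 < ∑ i ∈ range (⌊z⌋₊ + 1), (-1 : ℝ) ^ i * n.choose i * (z - i) ^ (n - 3) := by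
  set m := n - 3 with hmdef
  have hm1 : 1 ≤ m := by omega
  have hn3 : (3 : ℝ) < (n : ℝ) := by exact_mod_cast (by omega : 3 < n)
  have hcast : (m : ℝ) = (n : ℝ) - 3 := by
    rw [hmdef]; push_cast [Nat.cast_sub (by omega : 3 ≤ n)]; ring
  set r := (n : ℝ) ^ ((1 : ℝ) / ((n : ℝ) - 3)) with hrdef
  have hr1 : 1 < r := by
    rw [hrdef]
    have hlt : (1 : ℝ) < (n : ℝ) := by exact_mod_cast (by omega : 1 < n)
    have hy : (0 : ℝ) < (1 : ℝ) / ((n : ℝ) - 3) := by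
      apply div_pos one_pos; linarith
    exact (Real.one_lt_rpow_iff_of_pos (by positivity : (0:ℝ) < (n:ℝ))).mpr (Or.inl ⟨hlt, hy⟩)
  have hrm : r ^ m = (n : ℝ) := by
    rw [hrdef, ← Real.rpow_natCast ((n : ℝ) ^ ((1 : ℝ) / ((n : ℝ) - 3))) m,
      ← Real.rpow_mul (by positivity), hcast, one_div,
      inv_mul_cancel₀ (by linarith : (n : ℝ) - 3 ≠ 0), Real.rpow_one]
  by_cases hk0 : ⌊z⌋₊ = 0
  · rw [hk0]
    simp only [zero_add, Finset.sum_range_one, pow_zero, Nat.choose_zero_right,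
      Nat.cast_zero, Nat.cast_one, one_mul, sub_zero]
    positivity
  · have hk1 : 1 ≤ ⌊z⌋₊ := Nat.one_le_iff_ne_zero.mpr hk0
    have hfloor : (⌊z⌋₊ : ℝ) ≤ z := Nat.floor_le hz.le
    have hz1 : 1 ≤ z := by
      have : (1 : ℝ) ≤ (⌊z⌋₊ : ℝ) := by exact_mod_cast hk1
      linarith
    -- key inequality
    have key : (n : ℝ) * (z - 1) ^ m < z ^ m := by
      rcases eq_or_lt_of_le hz1 with h | h
      · rw [← h]
        simp only [sub_self, zero_pow (by omega : m ≠ 0), mul_zero, one_pow]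
        norm_num
      · have hr0 : 0 < r - 1 := by linarith
        have h1 : z * (r - 1) < r := (lt_div_iff₀ hr0).mp hz'
        have h2 : r * (z - 1) < z := by nlinarith
        have h3 : (r * (z - 1)) ^ m < z ^ m := by
          apply pow_lt_pow_left₀ h2 (by nlinarith) (by omega)
        calc (n : ℝ) * (z - 1) ^ m = (r * (z - 1)) ^ m := by rw [mul_pow, hrm]
          _ < z ^ m := h3
    -- weak decrease of the terms
    have tdec : ∀ i : ℕ, (i : ℝ) + 1 ≤ z →
        (n.choose (i + 1) : ℝ) * (z - (i + 1 : ℕ)) ^ m ≤ (n.choose i : ℝ) * (z - i) ^ m := by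
      intro i hi
      have hi0 : (0 : ℝ) ≤ (i : ℝ) := Nat.cast_nonneg i
      have h0 : (0 : ℝ) ≤ z - ((i : ℝ) + 1) := by linarith
      have hzi : (0 : ℝ) ≤ z - i := by linarith
      have hchoose : (n.choose (i + 1) : ℝ) ≤ (n : ℝ) * n.choose i := by
        have hnat : n.choose (i + 1) ≤ n.choose i * n := by
          calc n.choose (i + 1) ≤ n.choose (i + 1) * (i + 1) :=
                Nat.le_mul_of_pos_right _ (by omega)
            _ = n.choose i * (n - i) := Nat.choose_succ_right_eq n i
            _ ≤ n.choose i * n := Nat.mul_le_mul_left _ (Nat.sub_le n i)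
        calc (n.choose (i + 1) : ℝ) ≤ ((n.choose i * n : ℕ) : ℝ) := by exact_mod_cast hnat
          _ = (n : ℝ) * n.choose i := by push_cast; ring
      have hstep : (n : ℝ) * (z - ((i : ℝ) + 1)) ^ m ≤ (z - i) ^ m := by
        have e1 : z - ((i : ℝ) + 1) ≤ (z - 1) * (z - i) / z := by
          rw [le_div_iff₀ hz]; nlinarith
        have e2 : (z - ((i : ℝ) + 1)) ^ m ≤ ((z - 1) * (z - i) / z) ^ m :=
          pow_le_pow_left₀ h0 e1 m
        have e3 : (n : ℝ) * ((z - 1) * (z - i) / z) ^ m ≤ (z - i) ^ m := by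
          have hzm : (0 : ℝ) < z ^ m := pow_pos hz m
          have h4 : ((z - 1) * (z - i) / z) ^ m = (z - 1) ^ m * (z - i) ^ m / z ^ m := by
            rw [div_pow, mul_pow]
          rw [h4, ← mul_div_assoc, div_le_iff₀ hzm]
          have hzi' : (0 : ℝ) ≤ (z - i) ^ m := pow_nonneg hzi m
          nlinarith [mul_le_mul_of_nonneg_right key.le hzi']
        calc (n : ℝ) * (z - ((i : ℝ) + 1)) ^ m ≤ (n : ℝ) * ((z - 1) * (z - i) / z) ^ m := by
              apply mul_le_mul_of_nonneg_left e2 (by positivity)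
          _ ≤ (z - i) ^ m := e3
      have hc : ((i + 1 : ℕ) : ℝ) = (i : ℝ) + 1 := by push_cast; ring
      rw [hc]
      calc (n.choose (i + 1) : ℝ) * (z - ((i : ℝ) + 1)) ^ m
          ≤ ((n : ℝ) * n.choose i) * (z - ((i : ℝ) + 1)) ^ m :=
            mul_le_mul_of_nonneg_right hchoose (pow_nonneg h0 m)
        _ = (n.choose i : ℝ) * ((n : ℝ) * (z - ((i : ℝ) + 1)) ^ m) := by ring
        _ ≤ (n.choose i : ℝ) * (z - i) ^ m :=
            mul_le_mul_of_nonneg_left hstep (Nat.cast_nonneg _)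
    -- t i nonneg for i ≤ ⌊z⌋₊
    have tnonneg : ∀ i : ℕ, i ≤ ⌊z⌋₊ → (0 : ℝ) ≤ (n.choose i : ℝ) * (z - i) ^ m := by
      intro i hi
      have : (i : ℝ) ≤ z := by
        calc (i : ℝ) ≤ (⌊z⌋₊ : ℝ) := by exact_mod_cast hi
          _ ≤ z := hfloor
      have : (0 : ℝ) ≤ z - i := by linarith
      exact mul_nonneg (Nat.cast_nonneg _) (pow_nonneg this m)
    -- padded tail function
    set f : ℕ → ℝ := fun j => if j + 2 ≤ ⌊z⌋₊ then (n.choose (j + 2) : ℝ) * (z - (j + 2 : ℕ)) ^ m else 0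
      with hfdef
    have hfmono : ∀ j, f (j + 1) ≤ f j := by
      intro j
      simp only [hfdef]
      by_cases h1 : j + 1 + 2 ≤ ⌊z⌋₊
      · rw [if_pos h1, if_pos (by omega)]
        have : ((j + 2 : ℕ) : ℝ) + 1 ≤ z := by
          have : ((j + 3 : ℕ) : ℝ) ≤ (⌊z⌋₊ : ℝ) := by exact_mod_cast (by omega : j + 3 ≤ ⌊z⌋₊)
          push_cast at this ⊢
          linarith
        have := tdec (j + 2) this
        convert this using 3 <;> push_cast <;> ring
      · rw [if_neg h1]
        by_cases h2 : j + 2 ≤ ⌊z⌋₊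
        · rw [if_pos h2]; exact tnonneg (j + 2) h2
        · rw [if_neg h2]
    have hfpos : ∀ j, 0 ≤ f j := by
      intro j
      simp only [hfdef]
      by_cases h2 : j + 2 ≤ ⌊z⌋₊
      · rw [if_pos h2]; exact tnonneg (j + 2) h2
      · rw [if_neg h2]
    have htail : 0 ≤ ∑ j ∈ range (⌊z⌋₊ - 1), (-1 : ℝ) ^ j * ((n.choose (j + 2) : ℝ) * (z - (j + 2 : ℕ)) ^ m) := by
      have heq : ∀ j ∈ range (⌊z⌋₊ - 1),
          (-1 : ℝ) ^ j * ((n.choose (j + 2) : ℝ) * (z - (j + 2 : ℕ)) ^ m) = (-1 : ℝ) ^ j * f j := by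
        intro j hj
        rw [Finset.mem_range] at hj
        simp only [hfdef]
        rw [if_pos (by omega)]
      rw [Finset.sum_congr rfl heq]
      exact alt_nonneg f hfmono hfpos _
    -- split off first two terms
    obtain ⟨k', hk'⟩ : ∃ k', ⌊z⌋₊ = k' + 1 := ⟨⌊z⌋₊ - 1, by omega⟩
    rw [hk']
    rw [show k' + 1 + 1 = k' + 2 from rfl, show k' + 2 = (k' + 1) + 1 from rfl,
      Finset.sum_range_succ', Finset.sum_range_succ']
    have hsign : ∀ j : ℕ, (-1 : ℝ) ^ (j + 1 + 1) = (-1 : ℝ) ^ j := by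
      intro j; rw [pow_succ, pow_succ]; ring
    have htail' : 0 ≤ ∑ j ∈ range k',
        (-1 : ℝ) ^ (j + 1 + 1) * (n.choose (j + 1 + 1) : ℝ) * (z - (j + 1 + 1 : ℕ)) ^ m := by
      have : ∀ j ∈ range k',
          (-1 : ℝ) ^ (j + 1 + 1) * (n.choose (j + 1 + 1) : ℝ) * (z - (j + 1 + 1 : ℕ)) ^ m
            = (-1 : ℝ) ^ j * ((n.choose (j + 2) : ℝ) * (z - (j + 2 : ℕ)) ^ m) := by
        intro j hj
        rw [hsign j]
        push_cast
        ring
      rw [Finset.sum_congr rfl this]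
      have : k' = ⌊z⌋₊ - 1 := by omega
      rw [this]
      exact htail
    have hfirst : (n.choose 1 : ℝ) * (z - (1 : ℕ)) ^ m < (n.choose 0 : ℝ) * (z - (0 : ℕ)) ^ m := by
      simp only [Nat.choose_one_right, Nat.choose_zero_right, Nat.cast_one, one_mul,
        Nat.cast_zero, sub_zero, Nat.cast_one]
      exact key
    have e0 : (-1 : ℝ) ^ (0 : ℕ) * (n.choose 0 : ℝ) * (z - (0 : ℕ)) ^ m
        = (n.choose 0 : ℝ) * (z - (0 : ℕ)) ^ m := by norm_num
    have e1 : (-1 : ℝ) ^ (0 + 1 : ℕ) * (n.choose (0 + 1) : ℝ) * (z - (0 + 1 : ℕ)) ^ m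
        = -((n.choose 1 : ℝ) * (z - (1 : ℕ)) ^ m) := by norm_num
    rw [e0, e1] at *
    linarith [htail', hfirst]
end
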